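/- arXiv:1203.1188 — 3 statements merged into one kernel-verified Lean document; each statement's English description precedes it below -/
import Mathlib

section
/- For every β ∈ (0,2) there exists a finite constant c = c(β) such that for every s > 0 and every w ∈ ℝ³, ∫_{ℝ³}∫_{ℝ³} |w + v − u|^{−β} G(s,du) G(s,dv) ≤ c · s^{2−β}. In particular, for every T > 0, the supremum over s ∈ (0,T] and w ∈ ℝ³ of ∫_{ℝ³}∫_{ℝ³} |w + v − u|^{−β} G(s,du) G(s,dv) is finite. -/
set_option maxHeartbeats 1000000

open MeasureTheory Real
open scoped ENNReal NNReal

/-- The fundamental solution of the wave equation in `ℝ³` at time `t`: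
the finite measure `G(t) = (4πt)⁻¹ σ_t`, where `σ_t` is the uniform surface measure
(the 2-dimensional Hausdorff measure) on the sphere of radius `t` centered at the origin. -/
noncomputable def waveG (t : ℝ) : Measure (EuclideanSpace ℝ (Fin 3)) :=
  (ENNReal.ofReal (4 * π * t))⁻¹ •
    (μH[2] : Measure (EuclideanSpace ℝ (Fin 3))).restrict
      (Metric.sphere (0 : EuclideanSpace ℝ (Fin 3)) t)

local notation "E3" => EuclideanSpace ℝ (Fin 3)
local notation "E2" => EuclideanSpace ℝ (Fin 2)

lemma aux_norm_sq3 (u : E3) : ‖u‖^2 = (u 0)^2 + (u 1)^2 + (u 2)^2 := by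
  rw [EuclideanSpace.norm_eq, Real.sq_sqrt (by positivity)]
  simp [Fin.sum_univ_three, Real.norm_eq_abs, sq_abs]

lemma aux_norm_sq2 (y : E2) : ‖y‖^2 = (y 0)^2 + (y 1)^2 := by
  rw [EuclideanSpace.norm_eq, Real.sq_sqrt (by positivity)]
  simp [Fin.sum_univ_two, Real.norm_eq_abs, sq_abs]

lemma aux_coord2 (y : E2) (i : Fin 2) : |y i| ≤ ‖y‖ := by
  have h1 : (y i)^2 ≤ ∑ j, ‖y j‖^2 := by
    have := Finset.single_le_sum (f := fun j : Fin 2 => ‖y j‖^2)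
      (fun j _ => by positivity) (Finset.mem_univ i)
    simpa [Real.norm_eq_abs, sq_abs] using this
  calc |y i| = √((y i)^2) := (Real.sqrt_sq_eq_abs _).symm
    _ ≤ √(∑ j, ‖y j‖^2) := Real.sqrt_le_sqrt h1
    _ = ‖y‖ := (EuclideanSpace.norm_eq y).symm

lemma aux_ball2 (a : ℝ) : μH[2] (Metric.closedBall (0:E2) a) ≤ ENNReal.ofReal (16 * a^2) := by
  rcases lt_or_ge a 0 with ha | ha
  · rw [Metric.closedBall_eq_empty.mpr ha]; simp
  have hpi : (μH[2] : Measure (Fin 2 → ℝ)) = volume := by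
    have := MeasureTheory.hausdorffMeasure_pi_real (ι := Fin 2)
    simpa using this
  set e := WithLp.equiv 2 (Fin 2 → ℝ) with he
  have hg : LipschitzWith 2 (e.symm : (Fin 2 → ℝ) → E2) := by
    apply LipschitzWith.of_dist_le_mul
    intro x y
    rw [EuclideanSpace.dist_eq]
    have hb : ∀ i : Fin 2, dist (e.symm x i) (e.symm y i) ≤ dist x y := fun i => by
      simpa [he, WithLp.equiv_symm_apply, PiLp.toLp_apply] using dist_le_pi_dist x y i
    have hsum : ∑ i, dist (e.symm x i) (e.symm y i)^2 ≤ (2 * dist x y)^2 := by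
      rw [Fin.sum_univ_two]
      nlinarith [hb 0, hb 1, dist_nonneg (x := x) (y := y),
        dist_nonneg (x := e.symm x 0) (y := e.symm y 0),
        dist_nonneg (x := e.symm x 1) (y := e.symm y 1)]
    calc √(∑ i, dist (e.symm x i) (e.symm y i)^2) ≤ √((2 * dist x y)^2) :=
          Real.sqrt_le_sqrt hsum
      _ = 2 * dist x y := Real.sqrt_sq (by positivity)
      _ = (2:ℝ≥0) * dist x y := by norm_num
  have himg : Metric.closedBall (0:E2) a
      = e.symm '' (e '' (Metric.closedBall (0:E2) a)) := by
    rw [Set.image_image]; simp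
  have hsub : e '' (Metric.closedBall (0:E2) a)
      ⊆ Set.pi Set.univ (fun _ : Fin 2 => Set.Icc (-a) a) := by
    rintro x ⟨y, hy, rfl⟩
    intro i _
    have hyn : ‖y‖ ≤ a := by simpa [mem_closedBall_zero_iff] using hy
    have := (aux_coord2 y i).trans hyn
    have := abs_le.mp this
    simpa [he, WithLp.equiv_apply] using this
  have hvol : volume (Set.pi Set.univ (fun _ : Fin 2 => Set.Icc (-a) a))
      = ENNReal.ofReal (4 * a^2) := by
    rw [volume_pi_pi]
    simp only [Real.volume_Icc]
    rw [Finset.prod_const]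
    rw [← ENNReal.ofReal_pow (by linarith)]
    norm_num
    ring_nf
    rw [ENNReal.ofReal_mul (by positivity)]; norm_num
  have hrpow : ((2:ℝ≥0) : ℝ≥0∞) ^ (2:ℝ) = 4 := by
    rw [show ((2:ℝ≥0) : ℝ≥0∞) = 2 from rfl, show (2:ℝ) = ((2:ℕ):ℝ) by norm_num,
      ENNReal.rpow_natCast]
    norm_num
  calc μH[2] (Metric.closedBall (0:E2) a)
      = μH[2] (e.symm '' (e '' (Metric.closedBall (0:E2) a))) := by rw [← himg]
    _ ≤ ((2:ℝ≥0) : ℝ≥0∞) ^ (2:ℝ) * μH[2] (e '' (Metric.closedBall (0:E2) a)) :=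
        hg.hausdorffMeasure_image_le (by norm_num) _
    _ ≤ 4 * volume (Set.pi Set.univ (fun _ : Fin 2 => Set.Icc (-a) a)) := by
        rw [hrpow, ← hpi]
        exact mul_le_mul_right (measure_mono hsub) _
    _ = ENNReal.ofReal (16 * a^2) := by
        rw [hvol, show (4:ℝ≥0∞) = ENNReal.ofReal 4 by norm_num,
          ← ENNReal.ofReal_mul (by norm_num)]
        ring_nf

lemma aux_polecap {s t : ℝ} (hs : 0 < s) (ht0 : 0 ≤ t) (hts : t ≤ s) (p : E3) (hp : ‖p‖ = s) :
    μH[2] (Metric.sphere (0:E3) s ∩ Metric.closedBall p t)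
      ≤ ENNReal.ofReal (144 * t^2) := by
  classical
  set q : E3 := s • EuclideanSpace.single (2 : Fin 3) (1:ℝ) with hqdef
  have hq : ‖q‖ = s := by
    rw [hqdef, norm_smul, EuclideanSpace.norm_single]
    simp [abs_of_pos hs]
  have hq0 : q 0 = 0 := by simp [hqdef, EuclideanSpace.single_apply]
  have hq1 : q 1 = 0 := by simp [hqdef, EuclideanSpace.single_apply]
  have hq2 : q 2 = s := by simp [hqdef, EuclideanSpace.single_apply]
  set R := Submodule.reflection (ℝ ∙ (q - p))ᗮ with hRdef
  have hRq : R q = p := Submodule.reflection_sub (hq.trans hp.symm)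
  have hRp : R p = q := by rw [← hRq, Submodule.reflection_reflection]
  have hsub1 : Metric.sphere (0:E3) s ∩ Metric.closedBall p t
      ⊆ R '' (Metric.sphere (0:E3) s ∩ Metric.closedBall q t) := by
    rintro u ⟨h1, h2⟩
    refine ⟨R u, ⟨?_, ?_⟩, Submodule.reflection_reflection _ u⟩
    · rw [mem_sphere_zero_iff_norm] at h1 ⊢
      rw [R.norm_map]; exact h1
    · rw [mem_closedBall_iff_norm] at h2 ⊢
      calc ‖R u - q‖ = ‖R u - R p‖ := by rw [hRp]
        _ = ‖R (u - p)‖ := by rw [map_sub]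
        _ = ‖u - p‖ := R.norm_map _
        _ ≤ t := h2
  -- the graph parametrization of the cap around q
  set h : E2 → ℝ := fun y => √(s^2 - ‖y‖^2) with hhdef
  set f : E2 → E3 := fun y => (WithLp.equiv 2 (Fin 3 → ℝ)).symm ![y 0, y 1, h y] with hfdef
  set D : Set E2 := {y | ‖y‖ ≤ t ∧ ‖y‖^2 ≤ 3/4 * s^2} with hDdef
  have hDfacts : ∀ y ∈ D, (h y)^2 = s^2 - ‖y‖^2 ∧ s/2 ≤ h y := by
    rintro y ⟨-, hy2⟩
    constructor
    · exact Real.sq_sqrt (by nlinarith)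
    · have : ((s/2):ℝ) = √((s/2)^2) := (Real.sqrt_sq (by positivity)).symm
      rw [this, hhdef]
      exact Real.sqrt_le_sqrt (by nlinarith)
  have hfcomp : ∀ y : E2, (f y 0 = y 0) ∧ (f y 1 = y 1) ∧ (f y 2 = h y) := by
    intro y
    refine ⟨?_, ?_, ?_⟩ <;> simp [hfdef, WithLp.equiv_symm_apply, PiLp.toLp_apply]
  have hsubq : Metric.sphere (0:E3) s ∩ Metric.closedBall q t ⊆ f '' D := by
    rintro u ⟨h1, h2⟩
    rw [mem_sphere_zero_iff_norm] at h1
    rw [mem_closedBall_iff_norm] at h2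
    have hn3 : (u 0)^2 + (u 1)^2 + (u 2)^2 = s^2 := by
      rw [← aux_norm_sq3, h1]
    have hdq : (u 0)^2 + (u 1)^2 + (u 2 - s)^2 ≤ t^2 := by
      have hsq : ‖u - q‖^2 ≤ t^2 := by
        have := pow_le_pow_left₀ (norm_nonneg (u - q)) h2 2
        simpa using this
      have hexp : ‖u - q‖^2 = (u 0)^2 + (u 1)^2 + (u 2 - s)^2 := by
        rw [aux_norm_sq3 (u - q)]
        simp [hq0, hq1, hq2]
      linarith [hexp ▸ hsq]
    have hu2 : s/2 ≤ u 2 := by nlinarith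
    set y : E2 := (WithLp.equiv 2 (Fin 2 → ℝ)).symm ![u 0, u 1] with hydef
    have hy0 : y 0 = u 0 := by simp [hydef, WithLp.equiv_symm_apply, PiLp.toLp_apply]
    have hy1 : y 1 = u 1 := by simp [hydef, WithLp.equiv_symm_apply, PiLp.toLp_apply]
    have hyn : ‖y‖^2 = (u 0)^2 + (u 1)^2 := by
      rw [aux_norm_sq2, hy0, hy1]
    have hyD : y ∈ D := by
      constructor
      · have hy2 : ‖y‖^2 ≤ t^2 := by nlinarith
        calc ‖y‖ = √(‖y‖^2) := (Real.sqrt_sq (norm_nonneg y)).symm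
          _ ≤ √(t^2) := Real.sqrt_le_sqrt hy2
          _ = t := Real.sqrt_sq ht0
      · rw [hyn]; nlinarith
    have hhy : h y = u 2 := by
      rw [hhdef]
      simp only
      rw [hyn, show s^2 - ((u 0)^2 + (u 1)^2) = (u 2)^2 by linarith]
      exact Real.sqrt_sq (by linarith)
    refine ⟨y, hyD, ?_⟩
    rw [hfdef]
    simp only
    rw [Equiv.symm_apply_eq]
    funext i
    fin_cases i <;> simp [WithLp.equiv_apply, hy0, hy1, hhy]
  have hlip : LipschitzOnWith 3 f D := by
    apply LipschitzOnWith.of_dist_le_mul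
    intro x hx x' hx'
    obtain ⟨hx2, hxh⟩ := hDfacts x hx
    obtain ⟨hx'2, hx'h⟩ := hDfacts x' hx'
    have hxn : ‖x‖ ≤ s := by
      have : ‖x‖^2 ≤ s^2 := by nlinarith [hx.2]
      nlinarith [norm_nonneg x]
    have hx'n : ‖x'‖ ≤ s := by
      have : ‖x'‖^2 ≤ s^2 := by nlinarith [hx'.2]
      nlinarith [norm_nonneg x']
    set d := dist x x' with hddef
    have hd0 : 0 ≤ d := dist_nonneg
    have hdsq : (x 0 - x' 0)^2 + (x 1 - x' 1)^2 = d^2 := by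
      rw [hddef, EuclideanSpace.dist_eq, Real.sq_sqrt (by positivity)]
      simp [Fin.sum_univ_two, Real.dist_eq, sq_abs]
    have hkey : |h x - h x'| * s ≤ (2 * d) * s := by
      have hsum_pos : s ≤ h x + h x' := by linarith
      have habs : |‖x'‖ - ‖x‖| ≤ d := by
        rw [hddef, dist_eq_norm]
        have := abs_norm_sub_norm_le x' x
        rwa [norm_sub_rev] at this
      calc |h x - h x'| * s ≤ |h x - h x'| * (h x + h x') := by
            apply mul_le_mul_of_nonneg_left hsum_pos (abs_nonneg _)
        _ = |(h x - h x') * (h x + h x')| := by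
            rw [abs_mul, abs_of_nonneg (by linarith : (0:ℝ) ≤ h x + h x')]
        _ = |(h x)^2 - (h x')^2| := by rw [show (h x - h x') * (h x + h x')
              = (h x)^2 - (h x')^2 by ring]
        _ = |‖x'‖^2 - ‖x‖^2| := by rw [hx2, hx'2]; ring_nf
        _ = (‖x'‖ + ‖x‖) * |‖x'‖ - ‖x‖| := by
            rw [show ‖x'‖^2 - ‖x‖^2 = (‖x'‖ + ‖x‖) * (‖x'‖ - ‖x‖) by ring, abs_mul,
              abs_of_nonneg (by positivity)]
        _ ≤ (2 * s) * d := by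
            apply mul_le_mul (by linarith) habs (abs_nonneg _) (by positivity)
        _ = (2 * d) * s := by ring
    have hh2 : (h x - h x')^2 ≤ 4 * d^2 := by
      have h1 : |h x - h x'| ≤ 2 * d := le_of_mul_le_mul_right (by linarith [hkey]) hs
      nlinarith [abs_nonneg (h x - h x'), sq_abs (h x - h x')]
    have hfd : dist (f x) (f x') = √((x 0 - x' 0)^2 + (x 1 - x' 1)^2 + (h x - h x')^2) := by
      rw [EuclideanSpace.dist_eq]
      congr 1
      rw [Fin.sum_univ_three]
      have c0 := hfcomp x; have c1 := hfcomp x'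
      rw [c0.1, c0.2.1, c0.2.2, c1.1, c1.2.1, c1.2.2]
      simp [Real.dist_eq, sq_abs]
    rw [hfd]
    calc √((x 0 - x' 0)^2 + (x 1 - x' 1)^2 + (h x - h x')^2)
        ≤ √((3 * d)^2) := Real.sqrt_le_sqrt (by nlinarith)
      _ = 3 * d := Real.sqrt_sq (by positivity)
      _ = (3:ℝ≥0) * d := by norm_num
  have hD_ball : D ⊆ Metric.closedBall (0:E2) t := by
    rintro y ⟨hy, -⟩
    rwa [mem_closedBall_zero_iff]
  have hrpow3 : ((3:ℝ≥0) : ℝ≥0∞) ^ (2:ℝ) = 9 := by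
    rw [show ((3:ℝ≥0) : ℝ≥0∞) = 3 from rfl, show (2:ℝ) = ((2:ℕ):ℝ) by norm_num,
      ENNReal.rpow_natCast]
    norm_num
  calc μH[2] (Metric.sphere (0:E3) s ∩ Metric.closedBall p t)
      ≤ μH[2] (R '' (Metric.sphere (0:E3) s ∩ Metric.closedBall q t)) := measure_mono hsub1
    _ ≤ ((1:ℝ≥0) : ℝ≥0∞) ^ (2:ℝ) * μH[2] (Metric.sphere (0:E3) s ∩ Metric.closedBall q t) :=
        R.lipschitz.hausdorffMeasure_image_le (by norm_num) _
    _ = μH[2] (Metric.sphere (0:E3) s ∩ Metric.closedBall q t) := by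
        simp
    _ ≤ μH[2] (f '' D) := measure_mono hsubq
    _ ≤ ((3:ℝ≥0) : ℝ≥0∞) ^ (2:ℝ) * μH[2] D := hlip.hausdorffMeasure_image_le (by norm_num)
    _ ≤ 9 * μH[2] (Metric.closedBall (0:E2) t) := by
        rw [hrpow3]
        exact mul_le_mul_right (measure_mono hD_ball) _
    _ ≤ 9 * ENNReal.ofReal (16 * t^2) := mul_le_mul_right (aux_ball2 t) _
    _ = ENNReal.ofReal (144 * t^2) := by
        rw [show (9:ℝ≥0∞) = ENNReal.ofReal 9 by norm_num, ← ENNReal.ofReal_mul (by norm_num)]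
        ring_nf

lemma aux_sphere {s : ℝ} (hs : 0 < s) :
    μH[2] (Metric.sphere (0:E3) s) ≤ ENNReal.ofReal (864 * s^2) := by
  classical
  set c : Fin 3 × Bool → E3 :=
    fun j => (if j.2 then s else -s) • EuclideanSpace.single j.1 (1:ℝ) with hcdef
  have hcnorm : ∀ j, ‖c j‖ = s := by
    intro j
    rw [hcdef]
    simp only
    rw [norm_smul, EuclideanSpace.norm_single]
    rcases j.2 <;> simp [abs_of_pos hs, abs_of_neg (neg_neg_iff_pos.mpr hs)]
  have hinner : ∀ (j : Fin 3 × Bool) (u : E3),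
      inner ℝ u (c j) = (if j.2 then s else -s) * u j.1 := by
    intro j u
    rw [hcdef]
    simp only
    rw [real_inner_smul_right]
    have : (inner ℝ u (EuclideanSpace.single j.1 (1:ℝ)) : ℝ) = u j.1 := by
      rw [EuclideanSpace.inner_single_right]
      simp
    rw [this]
  have hcov : Metric.sphere (0:E3) s
      ⊆ ⋃ j : Fin 3 × Bool, (Metric.sphere (0:E3) s ∩ Metric.closedBall (c j) s) := by
    intro u hu
    have hnorm : ‖u‖ = s := mem_sphere_zero_iff_norm.mp hu
    have hex : ∃ i : Fin 3, s^2/4 ≤ (u i)^2 := by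
      by_contra hcon
      push_neg at hcon
      have h3 := aux_norm_sq3 u
      rw [hnorm] at h3
      nlinarith [hcon 0, hcon 1, hcon 2, mul_pos hs hs]
    obtain ⟨i, hi⟩ := hex
    have hmem : ∀ b : Bool, (if b then s else -s) * u i ≥ s^2/2 →
        u ∈ Metric.sphere (0:E3) s ∩ Metric.closedBall (c (i, b)) s := by
      intro b hb
      refine ⟨hu, ?_⟩
      rw [Metric.mem_closedBall, dist_eq_norm]
      have hsq : ‖u - c (i, b)‖^2 ≤ s^2 := by
        rw [norm_sub_sq_real, hnorm, hcnorm, hinner]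
        cases b
        · simp only [Bool.false_eq_true, if_false] at hb ⊢; nlinarith
        · simp only [if_true] at hb ⊢; nlinarith
      calc ‖u - c (i, b)‖ = √(‖u - c (i, b)‖^2) := (Real.sqrt_sq (norm_nonneg _)).symm
        _ ≤ √(s^2) := Real.sqrt_le_sqrt hsq
        _ = s := Real.sqrt_sq hs.le
    rcases le_or_gt 0 (u i) with hsign | hsign
    · refine Set.mem_iUnion.mpr ⟨(i, true), hmem true ?_⟩
      have : s/2 ≤ u i := by nlinarith
      simp only [if_true]; nlinarith
    · refine Set.mem_iUnion.mpr ⟨(i, false), hmem false ?_⟩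
      have : u i ≤ -(s/2) := by nlinarith
      simp only [Bool.false_eq_true, if_false]; nlinarith
  calc μH[2] (Metric.sphere (0:E3) s)
      ≤ μH[2] (⋃ j : Fin 3 × Bool, (Metric.sphere (0:E3) s ∩ Metric.closedBall (c j) s)) :=
        measure_mono hcov
    _ ≤ ∑' j : Fin 3 × Bool, μH[2] (Metric.sphere (0:E3) s ∩ Metric.closedBall (c j) s) :=
        measure_iUnion_le _
    _ ≤ ∑' _j : Fin 3 × Bool, ENNReal.ofReal (144 * s^2) :=
        ENNReal.tsum_le_tsum (fun j => aux_polecap hs hs.le le_rfl _ (hcnorm j))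
    _ = 6 * ENNReal.ofReal (144 * s^2) := by
        rw [tsum_eq_sum (s := Finset.univ) (by simp)]
        rw [Finset.sum_const]
        simp [Fintype.card_prod]
    _ = ENNReal.ofReal (864 * s^2) := by
        rw [show (6:ℝ≥0∞) = ENNReal.ofReal 6 by norm_num, ← ENNReal.ofReal_mul (by norm_num)]
        ring_nf

lemma aux_cap {s ρ : ℝ} (hs : 0 < s) (hρ0 : 0 ≤ ρ) (hρs : ρ ≤ s) (z : E3) :
    μH[2] (Metric.sphere (0:E3) s ∩ Metric.closedBall z ρ)
      ≤ ENNReal.ofReal (3456 * ρ^2) := by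
  by_cases hz : z = 0
  · subst hz
    rcases lt_or_ge ρ s with hlt | hge
    · have hempty : Metric.sphere (0:E3) s ∩ Metric.closedBall (0:E3) ρ = ∅ := by
        ext u
        simp only [Set.mem_inter_iff, Set.mem_empty_iff_false, iff_false, not_and]
        intro h1 h2
        rw [mem_sphere_zero_iff_norm] at h1
        rw [mem_closedBall_zero_iff] at h2
        linarith [h1 ▸ h2]
      rw [hempty]
      simp
    · have hρeq : ρ = s := le_antisymm hρs hge
      calc μH[2] (Metric.sphere (0:E3) s ∩ Metric.closedBall (0:E3) ρ)
          ≤ μH[2] (Metric.sphere (0:E3) s) := measure_mono Set.inter_subset_left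
        _ ≤ ENNReal.ofReal (864 * s^2) := aux_sphere hs
        _ ≤ ENNReal.ofReal (3456 * ρ^2) := by
            apply ENNReal.ofReal_le_ofReal; rw [hρeq]; nlinarith
  · have hzn : 0 < ‖z‖ := norm_pos_iff.mpr hz
    set p : E3 := (s / ‖z‖) • z with hpdef
    have hp : ‖p‖ = s := by
      rw [hpdef, norm_smul, Real.norm_eq_abs, abs_of_pos (div_pos hs hzn)]
      field_simp
    have hzp : ‖z - p‖ = |‖z‖ - s| := by
      have hzmp : z - p = (1 - s / ‖z‖) • z := by
        rw [hpdef, sub_smul, one_smul]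
      rw [hzmp, norm_smul, Real.norm_eq_abs]
      rw [← abs_of_nonneg (norm_nonneg z), ← abs_mul]
      congr 1
      field_simp
      simp only [abs_norm]; ring
    have hsub : Metric.sphere (0:E3) s ∩ Metric.closedBall z ρ
        ⊆ Metric.sphere (0:E3) s ∩ Metric.closedBall p (2*ρ) := by
      rintro u ⟨h1, h2⟩
      refine ⟨h1, ?_⟩
      rw [mem_closedBall_iff_norm] at h2 ⊢
      have hnu : ‖u‖ = s := mem_sphere_zero_iff_norm.mp h1
      have htri : ‖u - p‖ ≤ ‖u - z‖ + ‖z - p‖ := by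
        calc ‖u - p‖ = ‖(u - z) + (z - p)‖ := by rw [sub_add_sub_cancel]
          _ ≤ ‖u - z‖ + ‖z - p‖ := norm_add_le _ _
      have h3 : ‖z - p‖ ≤ ‖u - z‖ := by
        rw [hzp, ← hnu]
        calc |‖z‖ - ‖u‖| ≤ ‖z - u‖ := abs_norm_sub_norm_le z u
          _ = ‖u - z‖ := by rw [norm_sub_rev]
      linarith
    rcases le_or_gt (2*ρ) s with h2ρ | h2ρ
    · calc μH[2] (Metric.sphere (0:E3) s ∩ Metric.closedBall z ρ)
          ≤ μH[2] (Metric.sphere (0:E3) s ∩ Metric.closedBall p (2*ρ)) := measure_mono hsub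
        _ ≤ ENNReal.ofReal (144 * (2*ρ)^2) := aux_polecap hs (by linarith) h2ρ p hp
        _ ≤ ENNReal.ofReal (3456 * ρ^2) := by
            apply ENNReal.ofReal_le_ofReal; nlinarith
    · calc μH[2] (Metric.sphere (0:E3) s ∩ Metric.closedBall z ρ)
          ≤ μH[2] (Metric.sphere (0:E3) s) := measure_mono Set.inter_subset_left
        _ ≤ ENNReal.ofReal (864 * s^2) := aux_sphere hs
        _ ≤ ENNReal.ofReal (3456 * ρ^2) := by
            apply ENNReal.ofReal_le_ofReal; nlinarith

lemma aux_rpow_anti {β : ℝ} (hβ : 0 ≤ β) {x y : ℝ≥0∞} (h : x ≤ y) : y ^ (-β) ≤ x ^ (-β) := by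
  rw [ENNReal.rpow_neg, ENNReal.rpow_neg]
  exact ENNReal.inv_le_inv.mpr (ENNReal.rpow_le_rpow h hβ)

lemma aux_g_le {β a : ℝ} (hβ : 0 ≤ β) (ha : 0 < a) (x : E3) (hx : a ≤ ‖x‖) :
    (‖x‖₊ : ℝ≥0∞) ^ (-β) ≤ ENNReal.ofReal (a ^ (-β)) := by
  have h1 : ENNReal.ofReal a ≤ (‖x‖₊ : ℝ≥0∞) := by
    rw [← enorm_eq_nnnorm, ← ofReal_norm]
    exact ENNReal.ofReal_le_ofReal hx
  calc (‖x‖₊ : ℝ≥0∞) ^ (-β) ≤ (ENNReal.ofReal a) ^ (-β) := aux_rpow_anti hβ h1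
    _ = ENNReal.ofReal (a ^ (-β)) := ENNReal.ofReal_rpow_of_pos ha

lemma aux_J {β : ℝ} (hβ0 : 0 < β) (hβ2 : β < 2) :
    ∃ C : ℝ, 0 ≤ C ∧ ∀ s : ℝ, 0 < s → ∀ z : E3,
      ∫⁻ u, (‖z - u‖₊ : ℝ≥0∞) ^ (-β)
          ∂((μH[2] : Measure E3).restrict (Metric.sphere (0:E3) s))
        ≤ ENNReal.ofReal (C * s ^ ((2:ℝ) - β)) := by
  have h2 : (1:ℝ) < (2:ℝ) ^ ((2:ℝ) - β) :=
    (Real.one_lt_rpow_iff_of_pos (by norm_num)).mpr (Or.inl ⟨by norm_num, by linarith⟩)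
  set q : ℝ := ((2:ℝ) ^ ((2:ℝ) - β))⁻¹ with hqdef
  have hq0 : 0 < q := inv_pos.mpr (lt_trans zero_lt_one h2)
  have hq1 : q < 1 := by
    rw [hqdef]
    exact inv_lt_one_of_one_lt₀ h2
  have h2rpow : ((2:ℝ))^(2:ℝ) = 4 := by
    rw [show (2:ℝ) = ((2:ℕ):ℝ) by norm_num, Real.rpow_natCast]; norm_num
  have hqeq : q = (2:ℝ)^β / 4 := by
    rw [hqdef, Real.rpow_sub (by norm_num), h2rpow, inv_div]
  have h2b : 0 < (2:ℝ)^β := Real.rpow_pos_of_pos (by norm_num) β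
  set C : ℝ := 3456 + 3456 * (2:ℝ)^β * (1 - q)⁻¹ with hCdef
  have h1q : 0 < 1 - q := by linarith
  have hC0 : 0 ≤ C := by
    have h3 : 0 ≤ (1-q)⁻¹ := inv_nonneg.mpr h1q.le
    rw [hCdef]
    nlinarith [mul_nonneg h2b.le h3]
  refine ⟨C, hC0, ?_⟩
  intro s hs z
  set ν := (μH[2] : Measure E3).restrict (Metric.sphere (0:E3) s) with hν
  have hνball : ∀ r : ℝ, 0 ≤ r → r ≤ s →
      ν (Metric.closedBall z r) ≤ ENNReal.ofReal (3456 * r^2) := by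
    intro r h0 h1
    rw [hν, Measure.restrict_apply measurableSet_closedBall, Set.inter_comm]
    exact aux_cap hs h0 h1 z
  have hνuniv : ν Set.univ ≤ ENNReal.ofReal (3456 * s^2) := by
    rw [hν, Measure.restrict_apply_univ]
    exact (aux_sphere hs).trans (ENNReal.ofReal_le_ofReal (by nlinarith))
  set g : E3 → ℝ≥0∞ := fun u => (‖z - u‖₊ : ℝ≥0∞) ^ (-β) with hg
  set P : ℕ → Set E3 := fun n => Nat.casesOn n {u : E3 | s ≤ ‖z - u‖}
    (fun k => {u : E3 | s / 2^(k+1) < ‖z - u‖ ∧ ‖z - u‖ ≤ s / 2^k}) with hP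
  have hP0 : ∀ u : E3, u ∈ P 0 ↔ s ≤ ‖z - u‖ := fun u => Iff.rfl
  have hPS : ∀ (k : ℕ) (u : E3),
      u ∈ P (k+1) ↔ (s / 2^(k+1) < ‖z - u‖ ∧ ‖z - u‖ ≤ s / 2^k) := fun k u => Iff.rfl
  have hcov : (Set.univ : Set E3) ⊆ {z} ∪ ⋃ n, P n := by
    intro u _
    by_cases huz : u = z
    · exact Or.inl (by simp [huz])
    right
    have hr0 : 0 < ‖z - u‖ := by
      rw [norm_pos_iff, sub_ne_zero]
      exact fun h => huz h.symm
    rcases le_or_gt s ‖z - u‖ with hge | hlt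
    · exact Set.mem_iUnion.mpr ⟨0, (hP0 u).mpr hge⟩
    · have hex : ∃ m : ℕ, s / 2^m < ‖z - u‖ := by
        obtain ⟨m, hm⟩ := pow_unbounded_of_one_lt (s / ‖z - u‖) (by norm_num : (1:ℝ) < 2)
        refine ⟨m, ?_⟩
        rw [div_lt_iff₀ (by positivity)]
        rw [div_lt_iff₀ hr0] at hm
        linarith [hm]
      have hN0 : Nat.find hex ≠ 0 := by
        intro h0
        have := Nat.find_spec hex
        rw [h0] at this
        simp at this
        linarith
      obtain ⟨k, hk⟩ := Nat.exists_eq_succ_of_ne_zero hN0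
      have hspec := Nat.find_spec hex
      rw [hk] at hspec
      have hmin : ¬ (s / 2^k < ‖z - u‖) := Nat.find_min hex (by omega)
      exact Set.mem_iUnion.mpr ⟨k+1, (hPS k u).mpr ⟨hspec, le_of_not_gt hmin⟩⟩
  have hzzero : ∫⁻ u in {z}, g u ∂ν = 0 := by
    have hz0 : ν {z} = 0 := by
      rw [hν, Measure.restrict_apply (measurableSet_singleton z)]
      refine le_antisymm ?_ zero_le
      haveI : NullSingletonClass (μH[2] : Measure E3) :=
        MeasureTheory.Measure.nullSingletonClass_hausdorff E3 (by norm_num : (0:ℝ) < 2)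
      calc μH[2] ({z} ∩ Metric.sphere (0:E3) s) ≤ μH[2] {z} :=
            measure_mono Set.inter_subset_left
        _ = 0 := measure_singleton z
    rw [Measure.restrict_eq_zero.mpr hz0, lintegral_zero_measure]
  have hsplit : ∫⁻ u, g u ∂ν ≤ (∫⁻ u in {z}, g u ∂ν) + ∑' n, ∫⁻ u in P n, g u ∂ν := by
    calc ∫⁻ u, g u ∂ν = ∫⁻ u in Set.univ, g u ∂ν := by rw [Measure.restrict_univ]
      _ ≤ ∫⁻ u in {z} ∪ ⋃ n, P n, g u ∂ν := lintegral_mono_set hcov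
      _ ≤ (∫⁻ u in {z}, g u ∂ν) + ∫⁻ u in ⋃ n, P n, g u ∂ν := lintegral_union_le _ _ _
      _ ≤ _ := add_le_add_right (lintegral_iUnion_le _ _) _
  set U : ℕ → ℝ := fun n => Nat.casesOn n (3456 * s ^ ((2:ℝ) - β))
    (fun k => (3456 * (2:ℝ)^β * s ^ ((2:ℝ) - β)) * q^k) with hU
  have hU0 : U 0 = 3456 * s ^ ((2:ℝ) - β) := rfl
  have hUS : ∀ k : ℕ, U (k+1) = (3456 * (2:ℝ)^β * s ^ ((2:ℝ) - β)) * q^k := fun k => rfl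
  have hs2 : s^((2:ℝ)) = s^(2:ℕ) := by
    rw [← Real.rpow_natCast s 2]; norm_num
  have hsrw : s ^ ((2:ℝ) - β) = s^(-β) * s^(2:ℕ) := by
    rw [show (2:ℝ) - β = -β + 2 by ring, Real.rpow_add hs, hs2]
  have hpiece : ∀ n : ℕ, ∫⁻ u in P n, g u ∂ν ≤ ENNReal.ofReal (U n) := by
    intro n
    rcases n with _ | k
    · calc ∫⁻ u in P 0, g u ∂ν ≤ ∫⁻ _u in P 0, ENNReal.ofReal (s ^ (-β)) ∂ν := by
            apply setLIntegral_mono measurable_const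
            intro u hu
            exact aux_g_le hβ0.le hs _ ((hP0 u).mp hu)
        _ = ENNReal.ofReal (s ^ (-β)) * ν (P 0) := setLIntegral_const _ _
        _ ≤ ENNReal.ofReal (s ^ (-β)) * ENNReal.ofReal (3456 * s^2) :=
            mul_le_mul_right ((measure_mono (Set.subset_univ _)).trans hνuniv) _
        _ = ENNReal.ofReal (U 0) := by
            rw [← ENNReal.ofReal_mul (by positivity), hU0, hsrw]
            ring_nf
    · have hak : (0:ℝ) < s / 2^(k+1) := by positivity
      have h2k1 : (1:ℝ) ≤ 2^k := one_le_pow₀ (by norm_num)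
      calc ∫⁻ u in P (k+1), g u ∂ν
          ≤ ∫⁻ _u in P (k+1), ENNReal.ofReal ((s / 2^(k+1)) ^ (-β)) ∂ν := by
            apply setLIntegral_mono measurable_const
            intro u hu
            exact aux_g_le hβ0.le hak _ ((hPS k u).mp hu).1.le
        _ = ENNReal.ofReal ((s / 2^(k+1)) ^ (-β)) * ν (P (k+1)) := setLIntegral_const _ _
        _ ≤ ENNReal.ofReal ((s / 2^(k+1)) ^ (-β)) * ENNReal.ofReal (3456 * (s/2^k)^2) := by
            apply mul_le_mul_right
            refine le_trans (measure_mono ?_) (hνball (s/2^k) (by positivity)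
              (div_le_self hs.le h2k1))
            intro u hu
            rw [Metric.mem_closedBall, dist_eq_norm, norm_sub_rev]
            exact ((hPS k u).mp hu).2
        _ = ENNReal.ofReal (U (k+1)) := by
            rw [← ENNReal.ofReal_mul (by positivity), hUS, hsrw, hqeq]
            congr 1
            have e1 : (s/2^(k+1))^(-β) = s^(-β) * ((2:ℝ)^β)^(k+1) := by
              rw [Real.div_rpow hs.le (by positivity : (0:ℝ) ≤ 2^(k+1)),
                ← Real.rpow_natCast (2:ℝ) (k+1),
                ← Real.rpow_mul (by norm_num : (0:ℝ) ≤ 2),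
                show ((k+1 : ℕ):ℝ) * (-β) = -(β * ((k+1:ℕ):ℝ)) by ring,
                Real.rpow_neg (by norm_num : (0:ℝ) ≤ 2),
                Real.rpow_mul (by norm_num : (0:ℝ) ≤ 2),
                Real.rpow_natCast ((2:ℝ)^β) (k+1),
                div_eq_mul_inv, inv_inv]
            have e2 : ((s/2^k)^2 : ℝ) = s^2 * ((4:ℝ)^k)⁻¹ := by
              rw [div_pow, show ((2:ℝ)^k)^2 = 4^k by
                rw [← pow_mul, mul_comm, pow_mul]; norm_num, div_eq_mul_inv]
            rw [e1, e2, div_pow]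
            have h4 : ((4:ℝ)^k) ≠ 0 := by positivity
            field_simp
            ring
  have hUnn : ∀ n, 0 ≤ U n := by
    intro n
    rcases n with _ | k
    · rw [hU0]; positivity
    · rw [hUS]; positivity
  have hUsum : Summable U := by
    have h1 : Summable (fun n : ℕ => U (n+1)) := by
      have := (summable_geometric_of_lt_one hq0.le hq1).mul_left
        (3456 * (2:ℝ)^β * s ^ ((2:ℝ) - β))
      apply this.congr
      intro n
      rw [hUS]
    exact (summable_nat_add_iff 1).mp h1
  have hUsumval : ∑' n, U n = C * s^((2:ℝ)-β) := by
    rw [Summable.tsum_eq_zero_add hUsum]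
    have h1 : ∑' n:ℕ, U (n+1) = (3456 * (2:ℝ)^β * s^((2:ℝ)-β)) * (1-q)⁻¹ := by
      have h2 : ∑' n:ℕ, U (n+1) = ∑' n:ℕ, (3456 * (2:ℝ)^β * s^((2:ℝ)-β)) * q^n := by
        simp only [hUS]
      rw [h2, tsum_mul_left, tsum_geometric_of_lt_one hq0.le hq1]
    rw [h1, hU0, hCdef]
    ring
  calc ∫⁻ u, g u ∂ν ≤ (∫⁻ u in {z}, g u ∂ν) + ∑' n, ∫⁻ u in P n, g u ∂ν := hsplit
    _ = ∑' n, ∫⁻ u in P n, g u ∂ν := by rw [hzzero, zero_add]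
    _ ≤ ∑' n, ENNReal.ofReal (U n) := ENNReal.tsum_le_tsum hpiece
    _ = ENNReal.ofReal (∑' n, U n) := (ENNReal.ofReal_tsum_of_nonneg hUnn hUsum).symm
    _ = ENNReal.ofReal (C * s ^ ((2:ℝ) - β)) := by rw [hUsumval]

/-- For every `β ∈ (0,2)` there is a finite constant `c` such that for all
`s > 0` and `w ∈ ℝ³`, `∫∫ |w + v − u|^{−β} G(s,du) G(s,dv) ≤ c · s^{2−β}`.  In particular,
for every `T > 0` the supremum of this quantity over `s ∈ (0,T]` and `w ∈ ℝ³` is finite. -/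
theorem stmt1 (β : ℝ) (hβ : β ∈ Set.Ioo (0:ℝ) 2) :
    ∃ c : ℝ,
      (∀ s : ℝ, 0 < s → ∀ w : EuclideanSpace ℝ (Fin 3),
        (∫⁻ u, ∫⁻ v, (‖w + v - u‖₊ : ℝ≥0∞) ^ (-β) ∂(waveG s) ∂(waveG s))
          ≤ ENNReal.ofReal (c * s ^ ((2:ℝ) - β))) ∧
      ∀ T : ℝ, 0 < T →
        (⨆ (s : ℝ) (_ : s ∈ Set.Ioc (0:ℝ) T) (w : EuclideanSpace ℝ (Fin 3)),
          ∫⁻ u, ∫⁻ v, (‖w + v - u‖₊ : ℝ≥0∞) ^ (-β) ∂(waveG s) ∂(waveG s)) < ⊤ := by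
  obtain ⟨C, hC0, hJ⟩ := aux_J hβ.1 hβ.2
  have hc0 : 0 ≤ 54 * C / π^2 := by positivity
  have hmain : ∀ s : ℝ, 0 < s → ∀ w : EuclideanSpace ℝ (Fin 3),
      (∫⁻ u, ∫⁻ v, (‖w + v - u‖₊ : ℝ≥0∞) ^ (-β) ∂(waveG s) ∂(waveG s))
        ≤ ENNReal.ofReal ((54 * C / π^2) * s ^ ((2:ℝ) - β)) := by
    intro s hs w
    have h4πs : (0:ℝ) < 4 * π * s := by positivity
    set κ := (ENNReal.ofReal (4 * π * s))⁻¹ with hκ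
    set ν := (μH[2] : Measure E3).restrict (Metric.sphere (0:E3) s) with hν
    have hinner : ∀ u : E3,
        ∫⁻ v, (‖w + v - u‖₊ : ℝ≥0∞) ^ (-β) ∂(waveG s)
          ≤ κ * ENNReal.ofReal (C * s ^ ((2:ℝ) - β)) := by
      intro u
      have hre : ∀ v : E3, (‖w + v - u‖₊ : ℝ≥0∞) = (‖(u - w) - v‖₊ : ℝ≥0∞) := by
        intro v
        rw [show w + v - u = -((u - w) - v) by abel, nnnorm_neg]
      calc ∫⁻ v, (‖w + v - u‖₊ : ℝ≥0∞) ^ (-β) ∂(waveG s)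
          = ∫⁻ v, (‖(u - w) - v‖₊ : ℝ≥0∞) ^ (-β) ∂(waveG s) := by
            apply lintegral_congr
            intro v
            rw [hre v]
        _ = κ * ∫⁻ v, (‖(u - w) - v‖₊ : ℝ≥0∞) ^ (-β) ∂ν := by
            rw [waveG, lintegral_smul_measure, smul_eq_mul]
        _ ≤ κ * ENNReal.ofReal (C * s ^ ((2:ℝ) - β)) :=
            mul_le_mul_right (hJ s hs (u - w)) κ
    have hwuniv : waveG s Set.univ ≤ κ * ENNReal.ofReal (864 * s^2) := by
      rw [waveG, Measure.smul_apply, smul_eq_mul, Measure.restrict_apply_univ]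
      exact mul_le_mul_right (aux_sphere hs) _
    calc (∫⁻ u, ∫⁻ v, (‖w + v - u‖₊ : ℝ≥0∞) ^ (-β) ∂(waveG s) ∂(waveG s))
        ≤ ∫⁻ _u, κ * ENNReal.ofReal (C * s ^ ((2:ℝ) - β)) ∂(waveG s) :=
          lintegral_mono hinner
      _ = κ * ENNReal.ofReal (C * s ^ ((2:ℝ) - β)) * waveG s Set.univ := lintegral_const _
      _ ≤ κ * ENNReal.ofReal (C * s ^ ((2:ℝ) - β)) * (κ * ENNReal.ofReal (864 * s^2)) :=
          mul_le_mul_right hwuniv _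
      _ = ENNReal.ofReal ((54 * C / π^2) * s ^ ((2:ℝ) - β)) := by
          rw [hκ, ← ENNReal.ofReal_inv_of_pos h4πs]
          rw [← ENNReal.ofReal_mul (by positivity), ← ENNReal.ofReal_mul (by positivity),
            ← ENNReal.ofReal_mul (by positivity)]
          congr 1
          field_simp
          ring
  refine ⟨54 * C / π^2, hmain, ?_⟩
  intro T hT
  have hbound : (⨆ (s : ℝ) (_ : s ∈ Set.Ioc (0:ℝ) T) (w : EuclideanSpace ℝ (Fin 3)),
      ∫⁻ u, ∫⁻ v, (‖w + v - u‖₊ : ℝ≥0∞) ^ (-β) ∂(waveG s) ∂(waveG s))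
        ≤ ENNReal.ofReal ((54 * C / π^2) * T ^ ((2:ℝ) - β)) := by
    refine iSup_le fun s => iSup_le fun hs => iSup_le fun w => ?_
    refine (hmain s hs.1 w).trans (ENNReal.ofReal_le_ofReal ?_)
    apply mul_le_mul_of_nonneg_left _ hc0
    exact Real.rpow_le_rpow hs.1.le hs.2 (by linarith [hβ.2])
  exact lt_of_le_of_lt hbound ENNReal.ofReal_lt_top
end

section
/- Let β ∈ (0,2) and T > 0. There exists a finite constant C such that for all 0 ≤ s < t ≤ t̄ ≤ T, setting λ := (t̄ − s)/(t − s) (so λ ≥ 1), one has ∫_{ℝ³}∫_{ℝ³} λ · |λ v − u|^{−β} G(t−s,du) G(t−s,dv) ≤ C. -/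
open MeasureTheory Real
open scoped ENNReal NNReal

local notation "E3" => EuclideanSpace ℝ (Fin 3)

lemma e3_sub_apply (a b : E3) (j : Fin 3) : (a - b) j = a j - b j := rfl
lemma e3_smul_apply (c : ℝ) (a : E3) (j : Fin 3) : (c • a) j = c * a j := rfl

lemma e3_sum_sq (u : E3) : ∑ j, (u j)^2 = ‖u‖^2 := by
  rw [EuclideanSpace.norm_eq, Real.sq_sqrt (by positivity)]
  simp [Real.norm_eq_abs, sq_abs]

lemma e3_coord_le (u : E3) (j : Fin 3) : |u j| ≤ ‖u‖ := by
  rw [EuclideanSpace.norm_eq, ← Real.sqrt_sq_eq_abs]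
  apply Real.sqrt_le_sqrt
  have := Finset.single_le_sum (f := fun k => ‖u k‖^2) (fun k _ => by positivity)
    (Finset.mem_univ j)
  simpa [Real.norm_eq_abs, sq_abs] using this

lemma sqrt_sub_sqrt_le (A B m : ℝ) (hm : 0 < m) (hA : m^2 ≤ A) (hB : m^2 ≤ B) :
    |Real.sqrt A - Real.sqrt B| ≤ |A - B| / (2*m) := by
  have hA0 : 0 ≤ A := le_trans (by positivity) hA
  have hB0 : 0 ≤ B := le_trans (by positivity) hB
  have hsA : m ≤ Real.sqrt A := by
    rw [show m = Real.sqrt (m^2) by rw [Real.sqrt_sq hm.le]]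
    exact Real.sqrt_le_sqrt hA
  have hsB : m ≤ Real.sqrt B := by
    rw [show m = Real.sqrt (m^2) by rw [Real.sqrt_sq hm.le]]
    exact Real.sqrt_le_sqrt hB
  have key : |Real.sqrt A - Real.sqrt B| * (Real.sqrt A + Real.sqrt B) = |A - B| := by
    rw [← abs_of_nonneg (show (0:ℝ) ≤ Real.sqrt A + Real.sqrt B by positivity), ← abs_mul]
    congr 1
    have h1 : Real.sqrt A ^ 2 = A := Real.sq_sqrt hA0
    have h2 : Real.sqrt B ^ 2 = B := Real.sq_sqrt hB0
    nlinarith [h1, h2]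
  rw [le_div_iff₀ (by positivity)]
  calc |Real.sqrt A - Real.sqrt B| * (2*m)
      ≤ |Real.sqrt A - Real.sqrt B| * (Real.sqrt A + Real.sqrt B) := by
        apply mul_le_mul_of_nonneg_left (by linarith) (abs_nonneg _)
    _ = |A - B| := key

noncomputable def capG (r : ℝ) (i : Fin 3) (ε : ℝ) (p : ℝ × ℝ) : E3 :=
  WithLp.toLp 2 (Fin.insertNth i (ε * Real.sqrt (r^2 - p.1^2 - p.2^2)) ![p.1, p.2] : Fin 3 → ℝ)

def capDom (r : ℝ) : Set (ℝ × ℝ) := {p | p.1^2 + p.2^2 ≤ 2/3 * r^2}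

lemma capG_norm_sq (r : ℝ) (i : Fin 3) (ε : ℝ) (p q : ℝ × ℝ) :
    ‖capG r i ε p - capG r i ε q‖^2 =
      (ε * Real.sqrt (r^2 - p.1^2 - p.2^2) - ε * Real.sqrt (r^2 - q.1^2 - q.2^2))^2
        + ((p.1 - q.1)^2 + (p.2 - q.2)^2) := by
  rw [EuclideanSpace.norm_eq, Real.sq_sqrt (by positivity)]
  rw [Fin.sum_univ_succAbove _ i]
  simp only [Real.norm_eq_abs, sq_abs]
  have hs : ∀ j : Fin 3, (capG r i ε p - capG r i ε q) j = capG r i ε p j - capG r i ε q j :=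
    fun _ => rfl
  simp only [hs]
  unfold capG
  rw [Fin.sum_univ_two]
  simp [Fin.insertNth_apply_same, Fin.insertNth_apply_succAbove]

set_option maxHeartbeats 1000000 in
lemma capG_lipschitz (r : ℝ) (hr : 0 < r) (i : Fin 3) (ε : ℝ) (hε : ε = 1 ∨ ε = -1) :
    LipschitzOnWith (Real.toNNReal (Real.sqrt 14)) (capG r i ε) (capDom r) := by
  rw [lipschitzOnWith_iff_dist_le_mul]
  intro p hp q hq
  have hp' : p.1^2 + p.2^2 ≤ 2/3 * r^2 := hp
  have hq' : q.1^2 + q.2^2 ≤ 2/3 * r^2 := hq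
  set d := dist p q with hd
  have hd1 : |p.1 - q.1| ≤ d := by
    rw [hd, Prod.dist_eq]
    exact le_trans (le_of_eq (Real.dist_eq p.1 q.1).symm) (le_max_left _ _)
  have hd2 : |p.2 - q.2| ≤ d := by
    rw [hd, Prod.dist_eq]
    exact le_trans (le_of_eq (Real.dist_eq p.2 q.2).symm) (le_max_right _ _)
  have hd0 : 0 ≤ d := dist_nonneg
  -- bound on the sqrt part
  have hm : (r / Real.sqrt 3)^2 = r^2/3 := by
    rw [div_pow, Real.sq_sqrt (by norm_num)]
  have hA : (r / Real.sqrt 3)^2 ≤ r^2 - p.1^2 - p.2^2 := by rw [hm]; linarith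
  have hB : (r / Real.sqrt 3)^2 ≤ r^2 - q.1^2 - q.2^2 := by rw [hm]; linarith
  have hmpos : 0 < r / Real.sqrt 3 := by positivity
  have hsq := sqrt_sub_sqrt_le _ _ _ hmpos hA hB
  have habs : |(r^2 - p.1^2 - p.2^2) - (r^2 - q.1^2 - q.2^2)| ≤ 4 * r * d := by
    have e : (r^2 - p.1^2 - p.2^2) - (r^2 - q.1^2 - q.2^2)
        = (q.1 - p.1) * (q.1 + p.1) + (q.2 - p.2) * (q.2 + p.2) := by ring
    have hp1 : |p.1| ≤ r := by
      rw [← Real.sqrt_sq hr.le, ← Real.sqrt_sq_eq_abs]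
      exact Real.sqrt_le_sqrt (by nlinarith [sq_nonneg p.2])
    have hp2 : |p.2| ≤ r := by
      rw [← Real.sqrt_sq hr.le, ← Real.sqrt_sq_eq_abs]
      exact Real.sqrt_le_sqrt (by nlinarith [sq_nonneg p.1])
    have hq1 : |q.1| ≤ r := by
      rw [← Real.sqrt_sq hr.le, ← Real.sqrt_sq_eq_abs]
      exact Real.sqrt_le_sqrt (by nlinarith [sq_nonneg q.2])
    have hq2 : |q.2| ≤ r := by
      rw [← Real.sqrt_sq hr.le, ← Real.sqrt_sq_eq_abs]
      exact Real.sqrt_le_sqrt (by nlinarith [sq_nonneg q.1])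
    rw [e]
    calc |(q.1 - p.1) * (q.1 + p.1) + (q.2 - p.2) * (q.2 + p.2)|
        ≤ |(q.1 - p.1) * (q.1 + p.1)| + |(q.2 - p.2) * (q.2 + p.2)| := abs_add_le _ _
      _ = |q.1 - p.1| * |q.1 + p.1| + |q.2 - p.2| * |q.2 + p.2| := by rw [abs_mul, abs_mul]
      _ ≤ d * (2*r) + d * (2*r) := by
          apply add_le_add
          · apply mul_le_mul (by rwa [abs_sub_comm]) ?_ (abs_nonneg _) hd0
            calc |q.1 + p.1| ≤ |q.1| + |p.1| := abs_add_le _ _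
              _ ≤ 2*r := by linarith
          · apply mul_le_mul (by rwa [abs_sub_comm]) ?_ (abs_nonneg _) hd0
            calc |q.2 + p.2| ≤ |q.2| + |p.2| := abs_add_le _ _
              _ ≤ 2*r := by linarith
      _ = 4 * r * d := by ring
  have hfd : |Real.sqrt (r^2 - p.1^2 - p.2^2) - Real.sqrt (r^2 - q.1^2 - q.2^2)|
      ≤ 2 * Real.sqrt 3 * d := by
    have h3 : (0:ℝ) < Real.sqrt 3 := by positivity
    calc |Real.sqrt (r^2 - p.1^2 - p.2^2) - Real.sqrt (r^2 - q.1^2 - q.2^2)|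
        ≤ |(r^2 - p.1^2 - p.2^2) - (r^2 - q.1^2 - q.2^2)| / (2 * (r / Real.sqrt 3)) := hsq
      _ ≤ (4 * r * d) / (2 * (r / Real.sqrt 3)) := by
          apply div_le_div_of_nonneg_right habs (by positivity)
      _ = 2 * Real.sqrt 3 * d := by
          field_simp
          ring
  -- now assemble
  rw [dist_eq_norm]
  have hnormsq := capG_norm_sq r i ε p q
  have hε2 : ε^2 = 1 := by rcases hε with h | h <;> simp [h]
  have hbound : ‖capG r i ε p - capG r i ε q‖^2 ≤ 14 * d^2 := by
    rw [hnormsq]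
    have e1 : (ε * Real.sqrt (r^2 - p.1^2 - p.2^2) - ε * Real.sqrt (r^2 - q.1^2 - q.2^2))^2
        = ε^2 * (Real.sqrt (r^2 - p.1^2 - p.2^2) - Real.sqrt (r^2 - q.1^2 - q.2^2))^2 := by ring
    rw [e1, hε2, one_mul]
    have h1 : (Real.sqrt (r^2 - p.1^2 - p.2^2) - Real.sqrt (r^2 - q.1^2 - q.2^2))^2
        ≤ (2 * Real.sqrt 3 * d)^2 := by
      rw [← sq_abs]
      apply pow_le_pow_left₀ (abs_nonneg _) hfd
    have h3 : (2 * Real.sqrt 3 * d)^2 = 12 * d^2 := by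
      have h33 : Real.sqrt 3 ^ 2 = 3 := Real.sq_sqrt (by norm_num)
      calc (2 * Real.sqrt 3 * d)^2 = 4 * (Real.sqrt 3 ^2) * d^2 := by ring
        _ = 12 * d^2 := by rw [h33]; ring
    rw [h3] at h1
    have hp1 : (p.1 - q.1)^2 ≤ d^2 := by rw [← sq_abs]; apply pow_le_pow_left₀ (abs_nonneg _) hd1
    have hp2 : (p.2 - q.2)^2 ≤ d^2 := by rw [← sq_abs]; apply pow_le_pow_left₀ (abs_nonneg _) hd2
    linarith
  calc ‖capG r i ε p - capG r i ε q‖ = Real.sqrt (‖capG r i ε p - capG r i ε q‖^2) := by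
        rw [Real.sqrt_sq (norm_nonneg _)]
    _ ≤ Real.sqrt (14 * d^2) := Real.sqrt_le_sqrt hbound
    _ = Real.sqrt 14 * d := by
        rw [Real.sqrt_mul (by norm_num), Real.sqrt_sq hd0]
    _ = ↑(Real.toNNReal (Real.sqrt 14)) * d := by
        rw [Real.coe_toNNReal _ (Real.sqrt_nonneg _)]

def piece (r ρ : ℝ) (x : E3) (i : Fin 3) (ε : ℝ) : Set E3 :=
  {u | ‖u‖ = r ∧ ‖u - x‖ ≤ ρ ∧ r^2/3 ≤ (u i)^2 ∧ 0 ≤ ε * u i}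



lemma piece_subset (r ρ : ℝ) (hr : 0 < r) (x : E3) (i : Fin 3) (ε : ℝ) (hε : ε = 1 ∨ ε = -1) :
    piece r ρ x i ε ⊆ capG r i ε ''
      (capDom r ∩ Metric.closedBall (x (i.succAbove 0), x (i.succAbove 1)) ρ) := by
  rintro u ⟨h1, h2, h3, h4⟩
  have hsum : (u i)^2 + ((u (i.succAbove 0))^2 + (u (i.succAbove 1))^2) = r^2 := by
    have := e3_sum_sq u
    rw [h1] at this
    rw [← this, Fin.sum_univ_succAbove _ i, Fin.sum_univ_two]
  refine ⟨(u (i.succAbove 0), u (i.succAbove 1)), ⟨?_, ?_⟩, ?_⟩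
  · show (u (i.succAbove 0))^2 + (u (i.succAbove 1))^2 ≤ 2/3 * r^2
    linarith
  · rw [Metric.mem_closedBall, Prod.dist_eq]
    have k0 : dist (u (i.succAbove 0)) (x (i.succAbove 0)) ≤ ρ := by
      rw [Real.dist_eq]
      exact le_trans (by exact e3_coord_le (u - x) (i.succAbove 0)) h2
    have k1 : dist (u (i.succAbove 1)) (x (i.succAbove 1)) ≤ ρ := by
      rw [Real.dist_eq]
      exact le_trans (by exact e3_coord_le (u - x) (i.succAbove 1)) h2
    exact max_le k0 k1
  · -- capG r i ε p = u
    have harg : r^2 - (u (i.succAbove 0))^2 - (u (i.succAbove 1))^2 = (u i)^2 := by linarith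
    have hval : ε * Real.sqrt ((u i)^2) = u i := by
      rw [Real.sqrt_sq_eq_abs]
      rcases hε with h | h <;> rcases abs_cases (u i) with ⟨ha, _⟩ | ⟨ha, _⟩ <;>
        rw [h] at h4 ⊢ <;> rw [ha] <;> simp at h4 ⊢ <;> linarith
    ext j
    simp only [capG, PiLp.toLp_apply]
    rw [show (r^2 - (u (i.succAbove 0), u (i.succAbove 1)).1^2
        - (u (i.succAbove 0), u (i.succAbove 1)).2^2) = (u i)^2 from harg]
    rcases eq_or_ne j i with h | h
    · rw [h, Fin.insertNth_apply_same, hval]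
    · obtain ⟨k, rfl⟩ := Fin.exists_succAbove_eq h
      rw [Fin.insertNth_apply_succAbove]
      fin_cases k <;> simp

lemma sphere_cover (r ρ : ℝ) (hr : 0 < r) (x : E3) :
    Metric.sphere (0:E3) r ∩ Metric.closedBall x ρ ⊆
      ⋃ z : Fin 3 × Bool, piece r ρ x z.1 (if z.2 then 1 else -1) := by
  rintro u ⟨hu1, hu2⟩
  have h1 : ‖u‖ = r := by rwa [mem_sphere_zero_iff_norm] at hu1
  have h2 : ‖u - x‖ ≤ ρ := by rwa [Metric.mem_closedBall, dist_eq_norm] at hu2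
  have hsum : ∑ j, (u j)^2 = r^2 := by rw [e3_sum_sq, h1]
  have hex : ∃ i : Fin 3, r^2/3 ≤ (u i)^2 := by
    by_contra hcon
    push_neg at hcon
    have : ∑ j, (u j)^2 < ∑ _j : Fin 3, r^2/3 :=
      Finset.sum_lt_sum_of_nonempty Finset.univ_nonempty (fun j _ => hcon j)
    rw [hsum, Finset.sum_const] at this
    simp at this
    linarith
  obtain ⟨i, hi⟩ := hex
  rcases le_or_gt 0 (u i) with hs | hs
  · exact Set.mem_iUnion.2 ⟨(i, true), h1, h2, hi, by simpa using hs⟩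
  · exact Set.mem_iUnion.2 ⟨(i, false), h1, h2, hi, by simp; linarith⟩

lemma planar_vol (ρ : ℝ) (hρ : 0 ≤ ρ) (z : ℝ × ℝ) :
    (μH[2] : Measure (ℝ × ℝ)) (Metric.closedBall z ρ) = ENNReal.ofReal (4 * ρ^2) := by
  rw [hausdorffMeasure_prod_real, ← closedBall_prod_same, Measure.volume_eq_prod,
    Measure.prod_prod, Real.volume_closedBall, Real.volume_closedBall,
    ← ENNReal.ofReal_mul (by positivity)]
  congr 1
  ring

lemma capDom_subset (r : ℝ) (hr : 0 < r) : capDom r ⊆ Metric.closedBall ((0:ℝ),(0:ℝ)) r := by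
  intro p hp
  have hp' : p.1^2 + p.2^2 ≤ 2/3 * r^2 := hp
  rw [Metric.mem_closedBall, Prod.dist_eq]
  have h1 : dist p.1 0 ≤ r := by
    rw [Real.dist_eq, sub_zero, ← Real.sqrt_sq_eq_abs, ← Real.sqrt_sq hr.le]
    exact Real.sqrt_le_sqrt (by nlinarith [sq_nonneg p.2])
  have h2 : dist p.2 0 ≤ r := by
    rw [Real.dist_eq, sub_zero, ← Real.sqrt_sq_eq_abs, ← Real.sqrt_sq hr.le]
    exact Real.sqrt_le_sqrt (by nlinarith [sq_nonneg p.1])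
  exact max_le h1 h2

lemma planar_piece_bound (r ρ : ℝ) (hr : 0 < r) (hρ : 0 ≤ ρ) (z : ℝ × ℝ) :
    (μH[2] : Measure (ℝ × ℝ)) (capDom r ∩ Metric.closedBall z ρ)
      ≤ ENNReal.ofReal (4 * min ρ r ^ 2) := by
  rcases le_total ρ r with h | h
  · rw [min_eq_left h]
    exact le_trans (measure_mono Set.inter_subset_right) (le_of_eq (planar_vol ρ hρ z))
  · rw [min_eq_right h]
    exact le_trans (measure_mono (Set.inter_subset_left.trans (capDom_subset r hr)))
      (le_of_eq (planar_vol r hr.le _))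

lemma cap_bound (r ρ : ℝ) (hr : 0 < r) (hρ : 0 ≤ ρ) (x : E3) :
    μH[2] (Metric.sphere (0:E3) r ∩ Metric.closedBall x ρ)
      ≤ ENNReal.ofReal (336 * min ρ r ^ 2) := by
  have hm0 : 0 ≤ min ρ r := le_min hρ hr.le
  have hpiece : ∀ z : Fin 3 × Bool,
      μH[2] (piece r ρ x z.1 (if z.2 then (1:ℝ) else -1))
        ≤ ENNReal.ofReal (56 * min ρ r ^ 2) := by
    intro z
    set ε := if z.2 then (1:ℝ) else -1 with hεdef
    have hε : ε = 1 ∨ ε = -1 := by by_cases h : z.2 <;> simp [hεdef, h]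
    have hsub := piece_subset r ρ hr x z.1 ε hε
    have hlip := (capG_lipschitz r hr z.1 ε hε).mono
      (Set.inter_subset_left (t := Metric.closedBall (x (z.1.succAbove 0), x (z.1.succAbove 1)) ρ))
    have hK : ((Real.toNNReal (Real.sqrt 14) : ℝ≥0) : ℝ≥0∞) ^ (2:ℝ) = ENNReal.ofReal 14 := by
      have h1 : ((Real.toNNReal (Real.sqrt 14) : ℝ≥0) : ℝ≥0∞) = ENNReal.ofReal (Real.sqrt 14) :=
        rfl
      rw [h1, ENNReal.ofReal_rpow_of_pos (by positivity)]
      congr 1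
      rw [show (2:ℝ) = ((2:ℕ):ℝ) by norm_num, Real.rpow_natCast,
        Real.sq_sqrt (by norm_num : (0:ℝ) ≤ 14)]
    calc μH[2] (piece r ρ x z.1 ε)
        ≤ μH[2] (capG r z.1 ε ''
            (capDom r ∩ Metric.closedBall (x (z.1.succAbove 0), x (z.1.succAbove 1)) ρ)) :=
          measure_mono hsub
      _ ≤ ((Real.toNNReal (Real.sqrt 14) : ℝ≥0) : ℝ≥0∞) ^ (2:ℝ) *
            μH[2] (capDom r ∩ Metric.closedBall (x (z.1.succAbove 0), x (z.1.succAbove 1)) ρ) :=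
          hlip.hausdorffMeasure_image_le (by norm_num)
      _ ≤ ENNReal.ofReal 14 * ENNReal.ofReal (4 * min ρ r ^ 2) := by
          rw [hK]
          exact mul_le_mul_right (planar_piece_bound r ρ hr hρ _) _
      _ = ENNReal.ofReal (56 * min ρ r ^ 2) := by
          rw [← ENNReal.ofReal_mul (by norm_num)]
          congr 1
          ring
  calc μH[2] (Metric.sphere (0:E3) r ∩ Metric.closedBall x ρ)
      ≤ μH[2] (⋃ z : Fin 3 × Bool, piece r ρ x z.1 (if z.2 then (1:ℝ) else -1)) :=
        measure_mono (sphere_cover r ρ hr x)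
    _ ≤ ∑ z : Fin 3 × Bool, μH[2] (piece r ρ x z.1 (if z.2 then (1:ℝ) else -1)) :=
        measure_iUnion_fintype_le _ _
    _ ≤ ∑ _z : Fin 3 × Bool, ENNReal.ofReal (56 * min ρ r ^ 2) :=
        Finset.sum_le_sum (fun z _ => hpiece z)
    _ = 6 * ENNReal.ofReal (56 * min ρ r ^ 2) := by
        rw [Finset.sum_const]
        simp [Finset.card_univ]
    _ = ENNReal.ofReal (336 * min ρ r ^ 2) := by
        rw [show ((6:ℝ≥0∞)) = ENNReal.ofReal 6 by simp, ← ENNReal.ofReal_mul (by norm_num)]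
        congr 1
        ring


lemma waveG_apply (r : ℝ) (S : Set E3) (hS : MeasurableSet S) :
    waveG r S = (ENNReal.ofReal (4 * π * r))⁻¹
      * μH[2] (S ∩ Metric.sphere (0:E3) r) := by
  rw [waveG, Measure.smul_apply, Measure.restrict_apply hS, smul_eq_mul]

lemma waveG_cap (r ρ : ℝ) (hr : 0 < r) (hρ : 0 ≤ ρ) (x : E3) :
    waveG r (Metric.closedBall x ρ) ≤ ENNReal.ofReal (28 * min ρ r ^ 2 / r) := by
  have hm0 : 0 ≤ min ρ r := le_min hρ hr.le
  rw [waveG_apply r _ measurableSet_closedBall]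
  calc (ENNReal.ofReal (4 * π * r))⁻¹ * μH[2] (Metric.closedBall x ρ ∩ Metric.sphere (0:E3) r)
      ≤ (ENNReal.ofReal (4 * π * r))⁻¹ * ENNReal.ofReal (336 * min ρ r ^ 2) := by
        apply mul_le_mul_right
        rw [Set.inter_comm]
        exact cap_bound r ρ hr hρ x
    _ = ENNReal.ofReal (336 * min ρ r ^ 2) / ENNReal.ofReal (4 * π * r) := by
        rw [ENNReal.div_eq_inv_mul]
    _ = ENNReal.ofReal (336 * min ρ r ^ 2 / (4 * π * r)) := by
        rw [ENNReal.ofReal_div_of_pos (by positivity)]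
    _ ≤ ENNReal.ofReal (28 * min ρ r ^ 2 / r) := by
        apply ENNReal.ofReal_le_ofReal
        rw [div_le_div_iff₀ (by positivity) hr]
        nlinarith [Real.pi_gt_three, sq_nonneg (min ρ r), hr, mul_nonneg (mul_nonneg hm0 hm0) hr.le]

lemma waveG_univ (r : ℝ) (hr : 0 < r) :
    waveG r Set.univ ≤ ENNReal.ofReal (28 * r) := by
  have h1 : waveG r Set.univ = waveG r (Metric.closedBall 0 r) := by
    rw [waveG_apply r _ MeasurableSet.univ,
      waveG_apply r _ measurableSet_closedBall, Set.univ_inter,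
      Set.inter_eq_right.2 Metric.sphere_subset_closedBall]
  rw [h1]
  calc waveG r (Metric.closedBall 0 r) ≤ ENNReal.ofReal (28 * min r r ^ 2 / r) :=
      waveG_cap r r hr hr.le 0
    _ = ENNReal.ofReal (28 * r) := by
      rw [min_self]
      congr 1
      field_simp

lemma waveG_ae_sphere (r : ℝ) : ∀ᵐ u ∂(waveG r), u ∈ Metric.sphere (0:E3) r := by
  rw [waveG]
  exact Measure.ae_smul_measure (ae_restrict_mem (Metric.isClosed_sphere.measurableSet)) _

lemma waveG_singleton (r : ℝ) (c : E3) : waveG r {c} = 0 := by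
  haveI := MeasureTheory.Measure.noAtoms_hausdorff E3 (show (0:ℝ) < 2 by norm_num)
  rw [waveG_apply r _ (measurableSet_singleton c)]
  have : μH[2] ({c} ∩ Metric.sphere (0:E3) r) = 0 :=
    le_antisymm (le_trans (measure_mono Set.inter_subset_left)
      (le_of_eq (measure_singleton c))) zero_le
  rw [this, mul_zero]

lemma rpow_neg_antitone {a : ℝ} {b : ℝ≥0∞} {β : ℝ} (hβ : 0 ≤ β) (ha : 0 < a)
    (h : ENNReal.ofReal a ≤ b) : b ^ (-β) ≤ ENNReal.ofReal (a ^ (-β)) := by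
  rw [← ENNReal.ofReal_rpow_of_pos ha, ENNReal.rpow_neg, ENNReal.rpow_neg]
  exact ENNReal.inv_le_inv.2 (ENNReal.rpow_le_rpow h hβ)

lemma dyadic_term (r β : ℝ) (hr : 0 < r) (k : ℕ) :
    (2*r*(2⁻¹:ℝ)^k)^(-β) * (448*r*((2⁻¹:ℝ)^k)^2)
      = (448*(r*(2*r)^(-β))) * ((2:ℝ)^(β-2))^k := by
  have hp : (0:ℝ) < (2⁻¹:ℝ)^k := by positivity
  rw [Real.mul_rpow (by positivity) hp.le]
  have e1 : ((2⁻¹:ℝ)^k)^(-β) * ((2⁻¹:ℝ)^k)^2 = ((2⁻¹:ℝ)^k)^((2:ℝ)-β) := by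
    rw [show ((2⁻¹:ℝ)^k)^2 = ((2⁻¹:ℝ)^k)^((2:ℕ):ℝ) by rw [Real.rpow_natCast],
      ← Real.rpow_add hp]
    norm_num
    rw [add_comm]
    rfl
  have e2 : ((2⁻¹:ℝ)^k)^((2:ℝ)-β) = ((2:ℝ)^(β-2))^k := by
    rw [← Real.rpow_natCast (2⁻¹:ℝ) k, ← Real.rpow_natCast ((2:ℝ)^(β-2)) k,
      ← Real.rpow_mul (by norm_num), ← Real.rpow_mul (by norm_num)]
    rw [Real.inv_rpow (by norm_num : (0:ℝ) ≤ 2), ← Real.rpow_neg_one,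
      ← Real.rpow_mul (by norm_num)]
    congr 1
    ring
  calc (2*r)^(-β) * ((2⁻¹:ℝ)^k)^(-β) * (448*r*((2⁻¹:ℝ)^k)^2)
      = 448 * (r * (2*r)^(-β)) * (((2⁻¹:ℝ)^k)^(-β) * ((2⁻¹:ℝ)^k)^2) := by ring
    _ = 448 * (r * (2*r)^(-β)) * ((2:ℝ)^(β-2))^k := by rw [e1, e2]

section
variable (μ : Measure E3)

theorem inner_B_abstract (β r L : ℝ) (hβ1 : 0 < β) (hβ2 : β < 2) (hr : 0 < r)
    (hL1 : 1 ≤ L) (hL2 : L ≤ 2) (u : E3) (hu : ‖u‖ = r)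
    (hcap : ∀ (ρ : ℝ), 0 ≤ ρ → ∀ x : E3,
      μ (Metric.closedBall x ρ) ≤ ENNReal.ofReal (28 * min ρ r ^ 2 / r))
    (hnull : ∀ (A : Set E3), MeasurableSet A →
      A ∩ Metric.sphere (0:E3) r ⊆ {L⁻¹ • u} → μ A = 0) :
    ∫⁻ v, ((‖L • v - u‖₊ : ℝ≥0∞) ^ (-β)) ∂μ
      ≤ ENNReal.ofReal ((448*(r*(2*r)^(-β))) * (1 - (2:ℝ)^(β-2))⁻¹) := by
  have hL0 : 0 < L := lt_of_lt_of_le one_pos hL1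
  set f : E3 → ℝ≥0∞ := fun v => ((‖L • v - u‖₊ : ℝ≥0∞) ^ (-β)) with hf
  set c : E3 := L⁻¹ • u with hc
  have hdist : ∀ v : E3, ‖L • v - u‖ = L * dist v c := by
    intro v
    rw [dist_eq_norm, hc]
    have h1 : L • v - u = L • (v - L⁻¹ • u) := by
      rw [smul_sub, smul_inv_smul₀ hL0.ne']
    rw [h1, norm_smul, Real.norm_eq_abs, abs_of_pos hL0]
  set T : ℕ → Set E3 := fun k => Metric.closedBall c (4*r*(2⁻¹:ℝ)^k / L) with hT
  set E : ℕ → Set E3 := fun k => T k \ T (k+1) with hE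
  set U := ⋃ k, E k with hU
  have hEmeas : ∀ k, MeasurableSet (E k) :=
    fun k => measurableSet_closedBall.diff measurableSet_closedBall
  have hUmeas : MeasurableSet U := MeasurableSet.iUnion hEmeas
  -- complement is null
  have hcompl : μ Uᶜ = 0 := by
    apply hnull _ hUmeas.compl
    rintro v ⟨hv1, hv2⟩
    have hvnorm : ‖v‖ = r := by rwa [mem_sphere_zero_iff_norm] at hv2
    by_contra hne
    have hne' : v ≠ c := hne
    have hd0 : 0 < dist v c := dist_pos.2 hne'
    have hex : ∃ k : ℕ, 4*r*(2⁻¹:ℝ)^(k+1) / L < dist v c := by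
      obtain ⟨n, hn⟩ := exists_pow_lt_of_lt_one
        (show (0:ℝ) < dist v c * L / (4*r) by positivity)
        (show (2⁻¹:ℝ) < 1 by norm_num)
      refine ⟨n, ?_⟩
      have h1 : (2⁻¹:ℝ)^(n+1) ≤ (2⁻¹:ℝ)^n :=
        pow_le_pow_of_le_one (by norm_num) (by norm_num) (Nat.le_succ n)
      have h2 : 4*r*(2⁻¹:ℝ)^n < dist v c * L := by
        have := (lt_div_iff₀ (by positivity : (0:ℝ) < 4*r)).1 hn
        linarith [this]
      rw [div_lt_iff₀ hL0]
      have h3 : 4*r*(2⁻¹:ℝ)^(n+1) ≤ 4*r*(2⁻¹:ℝ)^n := by nlinarith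
      linarith
    classical
    have hmem : v ∈ U := by
      refine Set.mem_iUnion.2 ⟨Nat.find hex, ?_, ?_⟩
      · rw [Metric.mem_closedBall]
        rcases Nat.eq_zero_or_pos (Nat.find hex) with h0 | hpos
        · rw [h0]
          simp only [pow_zero, mul_one]
          rw [le_div_iff₀ hL0]
          have h4 : L * dist v c = ‖L • v - u‖ := (hdist v).symm
          have h5 : ‖L • v - u‖ ≤ L * ‖v‖ + ‖u‖ := by
            calc ‖L • v - u‖ ≤ ‖L • v‖ + ‖u‖ := norm_sub_le _ _
              _ = L * ‖v‖ + ‖u‖ := by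
                  rw [norm_smul, Real.norm_eq_abs, abs_of_pos hL0]
          rw [hvnorm, hu] at h5
          have h6 : L * r + r ≤ 4 * r := by nlinarith
          calc dist v c * L = L * dist v c := by ring
            _ = ‖L • v - u‖ := h4
            _ ≤ 4 * r := by linarith
        · have h7 := Nat.find_min hex (Nat.sub_lt hpos one_pos)
          push_neg at h7
          have h8 : Nat.find hex - 1 + 1 = Nat.find hex := Nat.succ_pred_eq_of_pos hpos
          rwa [h8] at h7
      · have h9 := Nat.find_spec hex
        rw [Metric.mem_closedBall]
        push_neg
        exact h9
    exact hv1 hmem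
  -- decompose integral
  have hq0 : (0:ℝ) < (2:ℝ)^(β-2) := Real.rpow_pos_of_pos (by norm_num) _
  have hq1 : (2:ℝ)^(β-2) < 1 :=
    Real.rpow_lt_one_of_one_lt_of_neg (by norm_num) (by linarith)
  have hA0 : (0:ℝ) ≤ 448*(r*(2*r)^(-β)) := by positivity
  have hterm : ∀ k : ℕ, ∫⁻ v in E k, f v ∂μ ≤
      ENNReal.ofReal (448*(r*(2*r)^(-β))) * ENNReal.ofReal ((2:ℝ)^(β-2)) ^ k := by
    intro k
    have hpk : (0:ℝ) < (2⁻¹:ℝ)^k := by positivity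
    have hbk : (0:ℝ) < 2*r*(2⁻¹:ℝ)^k := by positivity
    have hρk : (0:ℝ) ≤ 4*r*(2⁻¹:ℝ)^k / L := by positivity
    have hlowf : ∀ v ∈ E k, f v ≤ ENNReal.ofReal ((2*r*(2⁻¹:ℝ)^k)^(-β)) := by
      intro v hv
      apply rpow_neg_antitone hβ1.le hbk
      rw [← ENNReal.ofReal_coe_nnreal, coe_nnnorm]
      apply ENNReal.ofReal_le_ofReal
      have hv2 : ¬ dist v c ≤ 4*r*(2⁻¹:ℝ)^(k+1)/L := by
        have := hv.2
        rwa [Metric.mem_closedBall] at this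
      push_neg at hv2
      have h10 : 4*r*(2⁻¹:ℝ)^(k+1) < L * dist v c := by
        rw [div_lt_iff₀ hL0] at hv2
        linarith
      rw [hdist v]
      have h11 : 2*r*(2⁻¹:ℝ)^k = 4*r*(2⁻¹:ℝ)^(k+1) := by
        rw [pow_succ]
        ring
      linarith
    calc ∫⁻ v in E k, f v ∂μ
        ≤ ∫⁻ _v in E k, ENNReal.ofReal ((2*r*(2⁻¹:ℝ)^k)^(-β)) ∂μ :=
          setLIntegral_mono' (hEmeas k) hlowf
      _ = ENNReal.ofReal ((2*r*(2⁻¹:ℝ)^k)^(-β)) * μ (E k) := setLIntegral_const _ _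
      _ ≤ ENNReal.ofReal ((2*r*(2⁻¹:ℝ)^k)^(-β)) * μ (T k) :=
          mul_le_mul_right (measure_mono Set.diff_subset) _
      _ ≤ ENNReal.ofReal ((2*r*(2⁻¹:ℝ)^k)^(-β)) * ENNReal.ofReal (448*r*((2⁻¹:ℝ)^k)^2) := by
          apply mul_le_mul_right
          refine le_trans (hcap _ hρk c) (ENNReal.ofReal_le_ofReal ?_)
          have h12 : min (4*r*(2⁻¹:ℝ)^k/L) r ≤ 4*r*(2⁻¹:ℝ)^k :=
            le_trans (min_le_left _ _) (div_le_self (by positivity) hL1)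
          have h13 : 0 ≤ min (4*r*(2⁻¹:ℝ)^k/L) r := le_min hρk hr.le
          rw [div_le_iff₀ hr]
          nlinarith [sq_nonneg ((2⁻¹:ℝ)^k), mul_pos hr hr]
      _ = ENNReal.ofReal ((2*r*(2⁻¹:ℝ)^k)^(-β) * (448*r*((2⁻¹:ℝ)^k)^2)) :=
          (ENNReal.ofReal_mul (by positivity)).symm
      _ = ENNReal.ofReal ((448*(r*(2*r)^(-β))) * ((2:ℝ)^(β-2))^k) := by
          rw [dyadic_term r β hr k]
      _ = ENNReal.ofReal (448*(r*(2*r)^(-β))) * ENNReal.ofReal ((2:ℝ)^(β-2)) ^ k := by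
          rw [ENNReal.ofReal_mul hA0, ENNReal.ofReal_pow hq0.le]
  calc ∫⁻ v, f v ∂μ = ∫⁻ v in U, f v ∂μ + ∫⁻ v in Uᶜ, f v ∂μ :=
        (lintegral_add_compl f hUmeas).symm
    _ = ∫⁻ v in U, f v ∂μ := by
        rw [setLIntegral_measure_zero _ _ hcompl, add_zero]
    _ ≤ ∑' k, ∫⁻ v in E k, f v ∂μ := lintegral_iUnion_le E f
    _ ≤ ∑' k : ℕ, ENNReal.ofReal (448*(r*(2*r)^(-β))) * ENNReal.ofReal ((2:ℝ)^(β-2)) ^ k :=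
        ENNReal.tsum_le_tsum hterm
    _ = ENNReal.ofReal (448*(r*(2*r)^(-β))) * (1 - ENNReal.ofReal ((2:ℝ)^(β-2)))⁻¹ := by
        rw [ENNReal.tsum_mul_left, ENNReal.tsum_geometric]
    _ = ENNReal.ofReal ((448*(r*(2*r)^(-β))) * (1 - (2:ℝ)^(β-2))⁻¹) := by
        have e1 : (1:ℝ≥0∞) - ENNReal.ofReal ((2:ℝ)^(β-2)) = ENNReal.ofReal (1 - (2:ℝ)^(β-2)) := by
          rw [← ENNReal.ofReal_one, ← ENNReal.ofReal_sub _ hq0.le]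
        rw [e1, ← ENNReal.ofReal_inv_of_pos (by linarith), ← ENNReal.ofReal_mul hA0]
end

lemma ofReal_mul3 (x y z : ℝ) (hx : 0 ≤ x) (hy : 0 ≤ y) :
    ENNReal.ofReal x * (ENNReal.ofReal y * ENNReal.ofReal z)
      = ENNReal.ofReal (x*(y*z)) := by
  rw [ENNReal.ofReal_mul hx, ENNReal.ofReal_mul hy]

lemma ofReal_mul4 (x y z w : ℝ) (hx : 0 ≤ x) (hy : 0 ≤ y) (hyz : 0 ≤ y*z) :
    ENNReal.ofReal x * ((ENNReal.ofReal y * ENNReal.ofReal z) * ENNReal.ofReal w)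
      = ENNReal.ofReal (x*((y*z)*w)) := by
  rw [ENNReal.ofReal_mul hx, ENNReal.ofReal_mul hyz, ENNReal.ofReal_mul hy]

lemma waveG_null_of_subset_singleton (r : ℝ) (c' : E3) (A : Set E3) (hA : MeasurableSet A)
    (hsub : A ∩ Metric.sphere (0:E3) r ⊆ {c'}) : waveG r A = 0 := by
  haveI := MeasureTheory.Measure.noAtoms_hausdorff E3 (show (0:ℝ) < 2 by norm_num)
  rw [waveG_apply r _ hA]
  have h0 : μH[2] (A ∩ Metric.sphere (0:E3) r) = 0 :=
    le_antisymm ((measure_mono hsub).trans (le_of_eq (measure_singleton c'))) zero_le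
  rw [h0, mul_zero]

set_option maxHeartbeats 2000000 in
/-- Let `β ∈ (0,2)` and `T > 0`.  There is a finite constant `C` such that for
all `0 ≤ s < t ≤ tb ≤ T`, with `λ := (tb−s)/(t−s) ≥ 1`,
`∫∫ λ · |λ v − u|^{−β} G(t−s,du) G(t−s,dv) ≤ C`. -/
theorem stmt4 (β T : ℝ) (hβ : β ∈ Set.Ioo (0:ℝ) 2) (hT : 0 < T) :
    ∃ C : ℝ, ∀ s t tb : ℝ, 0 ≤ s → s < t → t ≤ tb → tb ≤ T →
      (∫⁻ u, ∫⁻ v,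
          ENNReal.ofReal ((tb - s) / (t - s)) *
            (‖((tb - s) / (t - s)) • v - u‖₊ : ℝ≥0∞) ^ (-β)
        ∂(waveG (t - s)) ∂(waveG (t - s)))
        ≤ ENNReal.ofReal C := by

  obtain ⟨hβ1, hβ2⟩ := hβ
  set M := max 1 T with hM
  have hM1 : (1:ℝ) ≤ M := le_max_left 1 T
  have hTM : T ≤ M := le_max_right 1 T
  set q := (2:ℝ)^(β-2) with hqdef
  have hq0 : 0 < q := Real.rpow_pos_of_pos (by norm_num) _
  have hq1 : q < 1 := Real.rpow_lt_one_of_one_lt_of_neg (by norm_num) (by linarith)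
  have hqinv : 0 ≤ (1-q)⁻¹ := inv_nonneg.2 (by linarith)
  refine ⟨3136*M^2 + 25088*M^2*(1-q)⁻¹, ?_⟩
  intro s t tb hs hst htb htT
  set r := t - s with hrdef
  have hr : 0 < r := sub_pos.2 hst
  set L := (tb - s)/r with hLdef
  have hL1 : 1 ≤ L := by rw [hLdef, le_div_iff₀ hr]; linarith
  have hL0 : 0 < L := lt_of_lt_of_le one_pos hL1
  have hLr : L * r = tb - s := div_mul_cancel₀ _ hr.ne'
  have hLrT : L * r ≤ T := by rw [hLr]; linarith
  have hLrM : L * r ≤ M := hLrT.trans hTM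
  have hrT : r ≤ T := by rw [hrdef]; linarith
  have hrM : r ≤ M := hrT.trans hTM
  have hmass := waveG_univ r hr
  -- the key real-power bound r^(2-β) ≤ M^2
  have hkey : ∀ a : ℝ, 0 < a → a ≤ M → a^((2:ℝ)-β) ≤ M^2 := by
    intro a ha haM
    calc a^((2:ℝ)-β) ≤ M^((2:ℝ)-β) := Real.rpow_le_rpow ha.le haM (by linarith)
      _ ≤ M^((2:ℕ):ℝ) := Real.rpow_le_rpow_of_exponent_le hM1 (by push_cast; linarith)
      _ = M^2 := Real.rpow_natCast M 2
  -- pull out the constant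
  have hpull : (∫⁻ u, ∫⁻ v, ENNReal.ofReal L * (‖L • v - u‖₊ : ℝ≥0∞)^(-β)
        ∂(waveG r) ∂(waveG r))
      = ENNReal.ofReal L *
        ∫⁻ u, ∫⁻ v, (‖L • v - u‖₊ : ℝ≥0∞)^(-β) ∂(waveG r) ∂(waveG r) := by
    rw [← lintegral_const_mul' _ _ ENNReal.ofReal_ne_top]
    apply lintegral_congr
    intro u
    rw [← lintegral_const_mul' _ _ ENNReal.ofReal_ne_top]
  rw [hpull]
  rcases le_or_gt L 2 with hL2 | hL2
  · -- regime B : 1 ≤ L ≤ 2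
    have hinner : ∀ u : E3, u ∈ Metric.sphere (0:E3) r →
        ∫⁻ v, (‖L • v - u‖₊ : ℝ≥0∞)^(-β) ∂(waveG r)
          ≤ ENNReal.ofReal ((448*(r*(2*r)^(-β))) * (1 - q)⁻¹) := by
      intro u hu
      rw [mem_sphere_zero_iff_norm] at hu
      exact inner_B_abstract (waveG r) β r L hβ1 hβ2 hr hL1 hL2 u hu
        (fun ρ hρ x => waveG_cap r ρ hr hρ x)
        (fun A hA hsub => waveG_null_of_subset_singleton r (L⁻¹ • u) A hA hsub)
    have houter : (∫⁻ u, ∫⁻ v, (‖L • v - u‖₊ : ℝ≥0∞)^(-β) ∂(waveG r) ∂(waveG r))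
        ≤ ENNReal.ofReal ((448*(r*(2*r)^(-β))) * (1 - q)⁻¹) * ENNReal.ofReal (28*r) := by
      calc (∫⁻ u, ∫⁻ v, (‖L • v - u‖₊ : ℝ≥0∞)^(-β) ∂(waveG r) ∂(waveG r))
          ≤ ∫⁻ _u, ENNReal.ofReal ((448*(r*(2*r)^(-β))) * (1 - q)⁻¹) ∂(waveG r) :=
            lintegral_mono_ae ((waveG_ae_sphere r).mono (fun u hu => hinner u hu))
        _ = ENNReal.ofReal ((448*(r*(2*r)^(-β))) * (1 - q)⁻¹) * waveG r Set.univ :=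
            lintegral_const _
        _ ≤ _ := mul_le_mul_right hmass _
    calc ENNReal.ofReal L *
          ∫⁻ u, ∫⁻ v, (‖L • v - u‖₊ : ℝ≥0∞)^(-β) ∂(waveG r) ∂(waveG r)
        ≤ ENNReal.ofReal 2 *
            (ENNReal.ofReal ((448*(r*(2*r)^(-β))) * (1 - q)⁻¹) * ENNReal.ofReal (28*r)) :=
          mul_le_mul' (ENNReal.ofReal_le_ofReal hL2) houter
      _ = ENNReal.ofReal (2 * (((448*(r*(2*r)^(-β))) * (1 - q)⁻¹) * (28*r))) :=
          ofReal_mul3 _ _ _ (by norm_num) (by positivity)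
      _ ≤ ENNReal.ofReal (3136*M^2 + 25088*M^2*(1-q)⁻¹) := by
          apply ENNReal.ofReal_le_ofReal
          have e1 : (2*r)^(-β) ≤ r^(-β) :=
            Real.rpow_le_rpow_of_nonpos hr (by linarith) (by linarith)
          have e2 : r^2 * r^(-β) = r^((2:ℝ)-β) := by
            rw [show ((2:ℝ)-β) = 2 + -β by ring, Real.rpow_add hr]
            congr 1
            rw [show (2:ℝ) = ((2:ℕ):ℝ) by norm_num, Real.rpow_natCast]
          have e3 : r^((2:ℝ)-β) ≤ M^2 := hkey r hr hrM
          have e4 : r^2 * (2*r)^(-β) ≤ M^2 := by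
            calc r^2 * (2*r)^(-β) ≤ r^2 * r^(-β) := by
                  apply mul_le_mul_of_nonneg_left e1 (by positivity)
              _ = r^((2:ℝ)-β) := e2
              _ ≤ M^2 := e3
          have e5 : 2 * (((448*(r*(2*r)^(-β))) * (1 - q)⁻¹) * (28*r))
              = 25088 * (r^2 * (2*r)^(-β)) * (1-q)⁻¹ := by ring
          rw [e5]
          have e6 : 25088 * (r^2 * (2*r)^(-β)) * (1-q)⁻¹ ≤ 25088 * M^2 * (1-q)⁻¹ := by
            apply mul_le_mul_of_nonneg_right _ hqinv
            nlinarith [e4]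
          nlinarith [e6, sq_nonneg M, hM1]
  · -- regime A : L > 2
    set a := (L-1)*r with hadef
    have ha : 0 < a := by rw [hadef]; nlinarith
    have hpt : ∀ u : E3, u ∈ Metric.sphere (0:E3) r → ∀ v : E3,
        v ∈ Metric.sphere (0:E3) r →
        (‖L • v - u‖₊ : ℝ≥0∞)^(-β) ≤ ENNReal.ofReal (a^(-β)) := by
      intro u hu v hv
      rw [mem_sphere_zero_iff_norm] at hu hv
      apply rpow_neg_antitone hβ1.le ha
      rw [← ENNReal.ofReal_coe_nnreal, coe_nnnorm]
      apply ENNReal.ofReal_le_ofReal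
      have h1 : ‖L • v‖ - ‖u‖ ≤ ‖L • v - u‖ := norm_sub_norm_le _ _
      have h2 : ‖L • v‖ = L * r := by
        rw [norm_smul, Real.norm_eq_abs, abs_of_pos hL0, hv]
      rw [h2, hu] at h1
      rw [hadef]
      linarith
    have hinner : ∀ u : E3, u ∈ Metric.sphere (0:E3) r →
        ∫⁻ v, (‖L • v - u‖₊ : ℝ≥0∞)^(-β) ∂(waveG r)
          ≤ ENNReal.ofReal (a^(-β)) * ENNReal.ofReal (28*r) := by
      intro u hu
      calc ∫⁻ v, (‖L • v - u‖₊ : ℝ≥0∞)^(-β) ∂(waveG r)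
          ≤ ∫⁻ _v, ENNReal.ofReal (a^(-β)) ∂(waveG r) :=
            lintegral_mono_ae ((waveG_ae_sphere r).mono (fun v hv => hpt u hu v hv))
        _ = ENNReal.ofReal (a^(-β)) * waveG r Set.univ := lintegral_const _
        _ ≤ _ := mul_le_mul_right hmass _
    have houter : (∫⁻ u, ∫⁻ v, (‖L • v - u‖₊ : ℝ≥0∞)^(-β) ∂(waveG r) ∂(waveG r))
        ≤ (ENNReal.ofReal (a^(-β)) * ENNReal.ofReal (28*r)) * ENNReal.ofReal (28*r) := by
      calc (∫⁻ u, ∫⁻ v, (‖L • v - u‖₊ : ℝ≥0∞)^(-β) ∂(waveG r) ∂(waveG r))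
          ≤ ∫⁻ _u, ENNReal.ofReal (a^(-β)) * ENNReal.ofReal (28*r) ∂(waveG r) :=
            lintegral_mono_ae ((waveG_ae_sphere r).mono (fun u hu => hinner u hu))
        _ = (ENNReal.ofReal (a^(-β)) * ENNReal.ofReal (28*r)) * waveG r Set.univ :=
            lintegral_const _
        _ ≤ _ := mul_le_mul_right hmass _
    calc ENNReal.ofReal L *
          ∫⁻ u, ∫⁻ v, (‖L • v - u‖₊ : ℝ≥0∞)^(-β) ∂(waveG r) ∂(waveG r)
        ≤ ENNReal.ofReal L *
            ((ENNReal.ofReal (a^(-β)) * ENNReal.ofReal (28*r)) * ENNReal.ofReal (28*r)) :=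
          mul_le_mul_right houter _
      _ = ENNReal.ofReal (L * ((a^(-β) * (28*r)) * (28*r))) :=
          ofReal_mul4 _ _ _ _ hL0.le (Real.rpow_nonneg ha.le _)
            (mul_nonneg (Real.rpow_nonneg ha.le _) (by positivity))
      _ ≤ ENNReal.ofReal (3136*M^2 + 25088*M^2*(1-q)⁻¹) := by
          apply ENNReal.ofReal_le_ofReal
          -- a^(-β) ≤ 4 * (L*r)^(-β)
          have hLr0 : 0 < L * r := mul_pos hL0 hr
          have e1 : a^(-β) ≤ 4 * (L*r)^(-β) := by
            have h1 : (L*r/2) ≤ a := by rw [hadef]; nlinarith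
            have h2 : a^(-β) ≤ (L*r/2)^(-β) :=
              Real.rpow_le_rpow_of_nonpos (by positivity) h1 (by linarith)
            have h3 : (L*r/2)^(-β) = (L*r)^(-β) * (2:ℝ)^β := by
              rw [show (L*r/2) = (L*r) * 2⁻¹ by ring,
                Real.mul_rpow hLr0.le (by norm_num),
                Real.inv_rpow (by norm_num : (0:ℝ) ≤ 2), ← Real.rpow_neg (by norm_num : (0:ℝ) ≤ 2)]
              norm_num
            have h4 : (2:ℝ)^β ≤ 4 := by
              calc (2:ℝ)^β ≤ (2:ℝ)^((2:ℕ):ℝ) :=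
                  Real.rpow_le_rpow_of_exponent_le one_le_two (by push_cast; linarith)
                _ = 4 := by rw [Real.rpow_natCast]; norm_num
            have h5 : 0 ≤ (L*r)^(-β) := Real.rpow_nonneg hLr0.le _
            calc a^(-β) ≤ (L*r)^(-β) * (2:ℝ)^β := by rw [← h3]; exact h2
              _ ≤ (L*r)^(-β) * 4 := mul_le_mul_of_nonneg_left h4 h5
              _ = 4 * (L*r)^(-β) := by ring
          -- L * (L*r)^(-β) * r^2 = (L*r)^(1-β) * r
          have e2 : L * (L*r)^(-β) * r^2 = (L*r)^((1:ℝ)-β) * r := by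
            rw [show ((1:ℝ)-β) = 1 + (-β) by ring, Real.rpow_add hLr0, Real.rpow_one]
            ring
          -- (L*r)^(1-β) * r ≤ M^2
          have e3 : (L*r)^((1:ℝ)-β) * r ≤ M^2 := by
            rcases le_total β 1 with hb | hb
            · have h1 : (L*r)^((1:ℝ)-β) ≤ M^((1:ℝ)-β) :=
                Real.rpow_le_rpow hLr0.le hLrM (by linarith)
              have h2 : M^((1:ℝ)-β) ≤ M^(1:ℝ) :=
                Real.rpow_le_rpow_of_exponent_le hM1 (by linarith)
              rw [Real.rpow_one] at h2
              have h3 : (L*r)^((1:ℝ)-β) ≤ M := h1.trans h2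
              have h4 : 0 ≤ (L*r)^((1:ℝ)-β) := Real.rpow_nonneg hLr0.le _
              nlinarith
            · have h1 : (L*r)^((1:ℝ)-β) ≤ r^((1:ℝ)-β) :=
                Real.rpow_le_rpow_of_nonpos hr (by nlinarith) (by linarith)
              have h2 : r^((1:ℝ)-β) * r = r^((2:ℝ)-β) := by
                rw [show ((2:ℝ)-β) = (1-β) + 1 by ring, Real.rpow_add hr, Real.rpow_one]
              have h3 : r^((2:ℝ)-β) ≤ M^2 := hkey r hr hrM
              calc (L*r)^((1:ℝ)-β) * r ≤ r^((1:ℝ)-β) * r :=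
                  mul_le_mul_of_nonneg_right h1 hr.le
                _ = r^((2:ℝ)-β) := h2
                _ ≤ M^2 := h3
          have e5 : L * a^(-β) * r^2 ≤ L * (4*(L*r)^(-β)) * r^2 := by
            have : 0 ≤ L * r^2 := by positivity
            nlinarith [e1, this]
          have e6 : L * (4*(L*r)^(-β)) * r^2 = 4 * ((L*r)^((1:ℝ)-β) * r) := by
            rw [← e2]; ring
          have e7 : 784 * (L * a^(-β) * r^2) ≤ 3136 * M^2 := by
            calc 784 * (L * a^(-β) * r^2) ≤ 784 * (L * (4*(L*r)^(-β)) * r^2) := by linarith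
              _ = 3136 * ((L*r)^((1:ℝ)-β) * r) := by rw [e6]; ring
              _ ≤ 3136 * M^2 := by linarith
          have e8 : (0:ℝ) ≤ 25088*M^2*(1-q)⁻¹ :=
            mul_nonneg (by positivity) hqinv
          calc L * ((a^(-β) * (28*r)) * (28*r)) = 784 * (L * a^(-β) * r^2) := by ring
            _ ≤ 3136*M^2 := e7
            _ ≤ 3136*M^2 + 25088*M^2*(1-q)⁻¹ := le_add_of_nonneg_right e8
end

section
/- Let α < β be real numbers and let u, b, k : [α,β] → [0,∞) be continuous functions. Let a > 0 and p̄ ≥ 0 with p̄ ≠ 1 be constants, and set q̄ := 1 − p̄. Assume that u(t) ≤ a + ∫_α^t b(s) u(s) ds + ∫_α^t k(s) u(s)^{p̄} ds for all t ∈ [α,β]. Then for every t ∈ [α,β] such that a^{q̄} + q̄ ∫_α^t k(s) exp(−q̄ ∫_α^s b(τ) dτ) ds > 0 (a condition which holds automatically for all t ∈ [α,β] when q̄ > 0), one has u(t) ≤ exp(∫_α^t b(s) ds) · ( a^{q̄} + q̄ ∫_α^t k(s) exp(−q̄ ∫_α^s b(τ) dτ) ds )^{1/q̄}. -/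
open MeasureTheory intervalIntegral

private lemma prim_facts {α β : ℝ} (hαβ : α ≤ β) {f : ℝ → ℝ}
    (hf : ContinuousOn f (Set.Icc α β)) :
    ContinuousOn (fun x => ∫ s in α..x, f s) (Set.Icc α β) ∧
      ∀ x ∈ Set.Ioo α β, HasDerivAt (fun y => ∫ s in α..y, f s) (f x) x := by
  constructor
  · have h := intervalIntegral.continuousOn_primitive_interval
      (μ := volume) (f := f) (a := α) (b := β)
      (by rw [Set.uIcc_of_le hαβ]; exact hf.integrableOn_Icc)
    rwa [Set.uIcc_of_le hαβ] at h
  · intro x hx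
    refine intervalIntegral.integral_hasDerivAt_right ?_ ?_ ?_
    · apply ContinuousOn.intervalIntegrable
      apply hf.mono
      rw [Set.uIcc_of_le hx.1.le]
      exact Set.Icc_subset_Icc le_rfl hx.2.le
    · exact (hf.mono Set.Ioo_subset_Icc_self).stronglyMeasurableAtFilter isOpen_Ioo x hx
    · exact hf.continuousAt (Icc_mem_nhds hx.1 hx.2)

/-- a Bihari–Gronwall type inequality.  Let `u, b, k : [α,β] → [0,∞)` be
continuous, `a > 0`, `p̄ ≥ 0`, `p̄ ≠ 1`, `q̄ := 1 − p̄`, and suppose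
`u(t) ≤ a + ∫_α^t b u + ∫_α^t k u^p̄` on `[α,β]`.  Then for every `t ∈ [α,β]` at which
`a^q̄ + q̄ ∫_α^t k(s) exp(−q̄ ∫_α^s b) ds > 0` (automatic when `q̄ > 0`), one has
`u(t) ≤ exp(∫_α^t b) · (a^q̄ + q̄ ∫_α^t k(s) exp(−q̄ ∫_α^s b) ds)^{1/q̄}`. -/
theorem stmt11 (α β : ℝ) (hαβ : α < β) (u b k : ℝ → ℝ)
    (hu : ContinuousOn u (Set.Icc α β)) (hb : ContinuousOn b (Set.Icc α β))
    (hk : ContinuousOn k (Set.Icc α β))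
    (hu0 : ∀ t ∈ Set.Icc α β, 0 ≤ u t) (hb0 : ∀ t ∈ Set.Icc α β, 0 ≤ b t)
    (hk0 : ∀ t ∈ Set.Icc α β, 0 ≤ k t)
    (a p' : ℝ) (ha : 0 < a) (hp0 : 0 ≤ p') (hp1 : p' ≠ 1)
    (hineq : ∀ t ∈ Set.Icc α β,
      u t ≤ a + (∫ s in α..t, b s * u s) + ∫ s in α..t, k s * u s ^ p') :
    ∀ t ∈ Set.Icc α β,
      0 < a ^ (1 - p')
          + (1 - p') * ∫ s in α..t, k s * Real.exp (-(1 - p') * ∫ τ in α..s, b τ) →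
      u t ≤ Real.exp (∫ s in α..t, b s) *
        (a ^ (1 - p')
          + (1 - p') * ∫ s in α..t, k s * Real.exp (-(1 - p') * ∫ τ in α..s, b τ))
          ^ (1 / (1 - p')) := by
  intro t ht hpos
  set q : ℝ := 1 - p' with hqdef
  have hq : q ≠ 0 := sub_ne_zero.mpr fun h => hp1 h.symm
  -- primitives
  obtain ⟨hBc, hBd⟩ := prim_facts hαβ.le hb
  have hbuC : ContinuousOn (fun s => b s * u s) (Set.Icc α β) := hb.mul hu
  have hkuC : ContinuousOn (fun s => k s * u s ^ p') (Set.Icc α β) :=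
    hk.mul (hu.rpow_const fun x _ => Or.inr hp0)
  obtain ⟨hP1c, hP1d⟩ := prim_facts hαβ.le hbuC
  obtain ⟨hP2c, hP2d⟩ := prim_facts hαβ.le hkuC
  set B : ℝ → ℝ := fun x => ∫ τ in α..x, b τ with hBdef
  set v : ℝ → ℝ := fun x => a + (∫ s in α..x, b s * u s) + ∫ s in α..x, k s * u s ^ p'
    with hvdef
  set g : ℝ → ℝ := fun s => k s * Real.exp (-q * B s) with hgdef
  -- positivity of v
  have hvpos : ∀ x ∈ Set.Icc α β, 0 < v x := by
    intro x hx
    have h1 : 0 ≤ ∫ s in α..x, b s * u s :=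
      intervalIntegral.integral_nonneg hx.1 fun s hs =>
        mul_nonneg (hb0 s ⟨hs.1, hs.2.trans hx.2⟩) (hu0 s ⟨hs.1, hs.2.trans hx.2⟩)
    have h2 : 0 ≤ ∫ s in α..x, k s * u s ^ p' :=
      intervalIntegral.integral_nonneg hx.1 fun s hs =>
        mul_nonneg (hk0 s ⟨hs.1, hs.2.trans hx.2⟩)
          (Real.rpow_nonneg (hu0 s ⟨hs.1, hs.2.trans hx.2⟩) p')
    have : v x = a + (∫ s in α..x, b s * u s) + ∫ s in α..x, k s * u s ^ p' := rfl
    rw [this]; linarith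
  have huv : ∀ x ∈ Set.Icc α β, u x ≤ v x := hineq
  -- continuity pieces
  have hvC : ContinuousOn v (Set.Icc α β) := (continuousOn_const.add hP1c).add hP2c
  have hEC : ContinuousOn (fun x => Real.exp (-q * B x)) (Set.Icc α β) :=
    (continuousOn_const.mul hBc).rexp
  have hgC : ContinuousOn g (Set.Icc α β) := hk.mul hEC
  obtain ⟨hKc, hKd⟩ := prim_facts hαβ.le hgC
  set K : ℝ → ℝ := fun x => ∫ s in α..x, g s with hKdef
  set w : ℝ → ℝ := fun x => v x ^ q * Real.exp (-q * B x) - q * K x with hwdef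
  have hwC : ContinuousOn w (Set.Icc α β) :=
    ((hvC.rpow_const fun x hx => Or.inl (hvpos x hx).ne').mul hEC).sub
      (continuousOn_const.mul hKc)
  -- derivative of w
  have hwd : ∀ x ∈ Set.Ioo α β, HasDerivAt w
      (q * Real.exp (-q * B x) *
        (v x ^ (q - 1) * (b x * u x + k x * u x ^ p') - b x * v x ^ q - k x)) x := by
    intro x hx
    have hVne : v x ≠ 0 := (hvpos x (Set.Ioo_subset_Icc_self hx)).ne'
    have hvd : HasDerivAt v (b x * u x + k x * u x ^ p') x :=
      ((hP1d x hx).const_add a).add (hP2d x hx)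
    have hE : HasDerivAt (fun y => Real.exp (-q * B y)) (Real.exp (-q * B x) * (-q * b x)) x :=
      ((hBd x hx).const_mul (-q)).exp
    have hwd0 := ((hvd.rpow_const (p := q) (Or.inl hVne)).mul hE).sub ((hKd x hx).const_mul q)
    refine hwd0.congr_deriv ?_
    show _ - q * (k x * Real.exp (-q * B x)) = _
    ring
  -- sign of the bracket
  have hbrack : ∀ x ∈ Set.Ioo α β,
      v x ^ (q - 1) * (b x * u x + k x * u x ^ p') - b x * v x ^ q - k x ≤ 0 := by
    intro x hx
    have hxI : x ∈ Set.Icc α β := Set.Ioo_subset_Icc_self hx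
    have hVpos := hvpos x hxI
    have h1 : b x * u x ≤ b x * v x := mul_le_mul_of_nonneg_left (huv x hxI) (hb0 x hxI)
    have h2 : k x * u x ^ p' ≤ k x * v x ^ p' :=
      mul_le_mul_of_nonneg_left (Real.rpow_le_rpow (hu0 x hxI) (huv x hxI) hp0) (hk0 x hxI)
    have e1 : v x ^ (q - 1) * v x = v x ^ q := by
      rw [← Real.rpow_add_one hVpos.ne' (q - 1)]
      congr 1; ring
    have e2 : v x ^ (q - 1) * v x ^ p' = 1 := by
      rw [← Real.rpow_add hVpos, show q - 1 + p' = 0 by rw [hqdef]; ring, Real.rpow_zero]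
    have hm : v x ^ (q - 1) * (b x * u x + k x * u x ^ p') ≤
        v x ^ (q - 1) * (b x * v x + k x * v x ^ p') :=
      mul_le_mul_of_nonneg_left (add_le_add h1 h2) (Real.rpow_nonneg hVpos.le _)
    have e3 : v x ^ (q - 1) * (b x * v x + k x * v x ^ p') = b x * v x ^ q + k x := by
      rw [mul_add, show v x ^ (q - 1) * (b x * v x) = b x * (v x ^ (q - 1) * v x) by ring, e1,
        show v x ^ (q - 1) * (k x * v x ^ p') = k x * (v x ^ (q - 1) * v x ^ p') by ring, e2,
        mul_one]
    linarith [e3 ▸ hm]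
  have hIooSub : Set.Ioo α t ⊆ Set.Ioo α β := Set.Ioo_subset_Ioo le_rfl ht.2
  have hIccSub : Set.Icc α t ⊆ Set.Icc α β := Set.Icc_subset_Icc le_rfl ht.2
  have hαmem : α ∈ Set.Icc α t := Set.left_mem_Icc.mpr ht.1
  have htmem : t ∈ Set.Icc α t := Set.right_mem_Icc.mpr ht.1
  have hwα : w α = a ^ q := by
    simp [hwdef, hvdef, hBdef, hKdef, intervalIntegral.integral_same]
  have hR : 0 < a ^ q + q * K t := by
    simpa only [hKdef, hgdef, hBdef] using hpos
  have hEt : (0:ℝ) < Real.exp (-q * B t) := Real.exp_pos _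
  have hEE : Real.exp (-q * B t) * Real.exp (q * B t) = 1 := by
    rw [← Real.exp_add]; simp
  have hvtpos := hvpos t ht
  -- main bound on v t
  have hvt : v t ≤ Real.exp (B t) * (a ^ q + q * K t) ^ (1 / q) := by
    have h9 : ((a ^ q + q * K t) * Real.exp (q * B t)) ^ (1 / q)
        = Real.exp (B t) * (a ^ q + q * K t) ^ (1 / q) := by
      rw [Real.mul_rpow hR.le (Real.exp_pos _).le, ← Real.exp_mul,
        show q * B t * (1 / q) = B t by field_simp]
      ring
    have h8 : (v t ^ q) ^ (1 / q) = v t := by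
      rw [← Real.rpow_mul hvtpos.le, mul_one_div_cancel hq, Real.rpow_one]
    rcases lt_or_gt_of_ne hq with hqneg | hqpos
    · -- q < 0 : w is monotone
      have hmono : MonotoneOn w (Set.Icc α t) := by
        refine monotoneOn_of_deriv_nonneg (convex_Icc α t) (hwC.mono hIccSub) ?_ ?_
        · rw [interior_Icc]
          exact fun x hx => ((hwd x (hIooSub hx)).differentiableAt).differentiableWithinAt
        · intro x hx
          rw [interior_Icc] at hx
          rw [(hwd x (hIooSub hx)).deriv]
          have := hbrack x (hIooSub hx)
          nlinarith [mul_neg_of_neg_of_pos hqneg (Real.exp_pos (-q * B x)), this]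
      have hwt : a ^ q ≤ w t := hwα ▸ hmono hαmem htmem ht.1
      have h6 : a ^ q + q * K t ≤ v t ^ q * Real.exp (-q * B t) := by
        have : w t = v t ^ q * Real.exp (-q * B t) - q * K t := rfl
        linarith [this ▸ hwt]
      have h5 : (a ^ q + q * K t) * Real.exp (q * B t) ≤ v t ^ q := by
        calc (a ^ q + q * K t) * Real.exp (q * B t)
            ≤ v t ^ q * Real.exp (-q * B t) * Real.exp (q * B t) :=
              mul_le_mul_of_nonneg_right h6 (Real.exp_pos _).le
          _ = v t ^ q := by rw [mul_assoc, hEE, mul_one]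
      have h7 : (v t ^ q) ^ (1 / q) ≤ ((a ^ q + q * K t) * Real.exp (q * B t)) ^ (1 / q) :=
        Real.rpow_le_rpow_of_nonpos (mul_pos hR (Real.exp_pos _)) h5
          (le_of_lt (one_div_neg.mpr hqneg))
      rw [h8, h9] at h7
      exact h7
    · -- 0 < q : w is antitone
      have hmono : AntitoneOn w (Set.Icc α t) := by
        refine antitoneOn_of_deriv_nonpos (convex_Icc α t) (hwC.mono hIccSub) ?_ ?_
        · rw [interior_Icc]
          exact fun x hx => ((hwd x (hIooSub hx)).differentiableAt).differentiableWithinAt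
        · intro x hx
          rw [interior_Icc] at hx
          rw [(hwd x (hIooSub hx)).deriv]
          have := hbrack x (hIooSub hx)
          nlinarith [mul_pos hqpos (Real.exp_pos (-q * B x)), this]
      have hwt : w t ≤ a ^ q := hwα ▸ hmono hαmem htmem ht.1
      have h6 : v t ^ q * Real.exp (-q * B t) ≤ a ^ q + q * K t := by
        have : w t = v t ^ q * Real.exp (-q * B t) - q * K t := rfl
        linarith [this ▸ hwt]
      have h5 : v t ^ q ≤ (a ^ q + q * K t) * Real.exp (q * B t) := by
        calc v t ^ q = v t ^ q * Real.exp (-q * B t) * Real.exp (q * B t) := by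
              rw [mul_assoc, hEE, mul_one]
          _ ≤ (a ^ q + q * K t) * Real.exp (q * B t) :=
              mul_le_mul_of_nonneg_right h6 (Real.exp_pos _).le
      have h7 : (v t ^ q) ^ (1 / q) ≤ ((a ^ q + q * K t) * Real.exp (q * B t)) ^ (1 / q) :=
        Real.rpow_le_rpow (Real.rpow_nonneg hvtpos.le q) h5 (le_of_lt (one_div_pos.mpr hqpos))
      rw [h8, h9] at h7
      exact h7
  have final : u t ≤ Real.exp (B t) * (a ^ q + q * K t) ^ (1 / q) :=
    le_trans (huv t ht) hvt
  simpa only [hBdef, hKdef, hgdef] using final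
end
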